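/- arXiv:1902.06235 — 3 statements merged into one kernel-verified Lean document; each statement's English description precedes it below -/
import Mathlib

section
/- Assume R is positive definite and Q is positive semidefinite. The CDRE quantities with zero terminal data depend only on the time to go: for all horizons N, N′ ≥ d, all modes i, all 0 ≤ r ≤ d−1, and all times t, t′ with N − t = N′ − t′, one has P_i(t, N) = P_i(t′, N′) and P_i^0(t, N) = P_i^0(t′, N′) whenever −1 ≤ t ≤ N and −1 ≤ t′ ≤ N′, and W_i(t, N) = W_i(t′, N′) and T_i^r(t, N) = T_i^r(t′, N′) whenever −d ≤ t ≤ N−d and −d ≤ t′ ≤ N′−d. -/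
open MeasureTheory Filter Matrix Topology
open scoped ENNReal

noncomputable section

/-- The data of a Markov jump linear system with input delay:
dimensions `n, m`, number of modes `L`, delay `d`, mode matrices `A, B`,
symmetric weight matrices `Q, R`, and a row-stochastic transition matrix `Pr`. -/
structure MJParams where
  n : ℕ
  m : ℕ
  L : ℕ
  d : ℕ
  hn : 0 < n
  hm : 0 < m
  hL : 0 < L
  hd : 0 < d
  A : Fin L → Matrix (Fin n) (Fin n) ℝ
  B : Fin L → Matrix (Fin n) (Fin m) ℝ
  Q : Matrix (Fin n) (Fin n) ℝ
  R : Matrix (Fin m) (Fin m) ℝ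
  Pr : Matrix (Fin L) (Fin L) ℝ
  hQsymm : Q.IsSymm
  hRsymm : R.IsSymm
  hPrnonneg : ∀ i j, 0 ≤ Pr i j
  hPrrow : ∀ i, ∑ j, Pr i j = 1

namespace MJParams

variable (S : MJParams)

/-- Probability weight `λ_{i j₁} λ_{j₁ j₂} ⋯ λ_{j_{s-1} j_s}` of the mode path
`j = (j₁, …, j_s)` (0-indexed) started from mode `i`. -/
def pw (i : Fin S.L) {s : ℕ} (j : Fin s → Fin S.L) : ℝ :=
  ∏ t : Fin s,
    S.Pr (if _ : (t : ℕ) = 0 then i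
          else j ⟨(t : ℕ) - 1, lt_of_le_of_lt (Nat.sub_le _ _) t.isLt⟩) (j t)

/-- `E_i^{(s)}[f]`: expectation of a (matrix-valued) function of mode paths of length `s`
started from mode `i`. -/
def expect (i : Fin S.L) (s : ℕ) {α : Type*} [AddCommMonoid α] [Module ℝ α]
    (f : (Fin s → Fin S.L) → α) : α :=
  ∑ j : Fin s → Fin S.L, S.pw i j • f j

def dflt : Fin S.L := ⟨0, S.hL⟩

/-- Entry `q` (0-indexed) of a mode path, i.e. `j_{q+1}` in 1-indexed notation. -/
def pget {s : ℕ} (j : Fin s → Fin S.L) (q : ℕ) : Fin S.L :=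
  if h : q < s then j ⟨q, h⟩ else S.dflt

def Aget {s : ℕ} (j : Fin s → Fin S.L) (q : ℕ) : Matrix (Fin S.n) (Fin S.n) ℝ :=
  S.A (S.pget j q)

def Bget {s : ℕ} (j : Fin s → Fin S.L) (q : ℕ) : Matrix (Fin S.n) (Fin S.m) ℝ :=
  S.B (S.pget j q)

/-- The product `A_{j (a+c-1)} * ⋯ * A_{j a}` along a mode path (identity when `c = 0`). -/
def Aprod {s : ℕ} (j : Fin s → Fin S.L) (a c : ℕ) : Matrix (Fin S.n) (Fin S.n) ℝ :=
  ((List.range c).map (fun t => S.Aget j (a + c - 1 - t))).prod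

end MJParams

/-- The coupled difference Riccati equation (CDRE) with zero terminal data, horizon `N`.
The matrix inverse `(W _ _)⁻¹` is Mathlib's matrix inverse (which is the genuine inverse
whenever the matrix is invertible). -/
structure CDRE (S : MJParams) (N : ℤ) where
  P : Fin S.L → ℤ → Matrix (Fin S.n) (Fin S.n) ℝ
  P0 : Fin S.L → ℤ → Matrix (Fin S.n) (Fin S.n) ℝ
  W : Fin S.L → ℤ → Matrix (Fin S.m) (Fin S.m) ℝ
  T0 : Fin S.L → ℤ → Matrix (Fin S.m) (Fin S.n) ℝ
  T : ℕ → Fin S.L → ℤ → Matrix (Fin S.m) (Fin S.m) ℝ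
  hPterm : ∀ i, P i N = 0
  hP0term : ∀ i, ∀ t : ℤ, 0 ≤ t → t ≤ (S.d : ℤ) - 1 → P0 i (N - t) = 0
  hT0term : ∀ i, ∀ t : ℤ, 0 ≤ t → t ≤ (S.d : ℤ) - 1 → T0 i (N - t) = 0
  hTterm : ∀ r : ℕ, 1 ≤ r → r ≤ S.d - 1 → ∀ i, ∀ t : ℤ, 0 ≤ t → t ≤ (S.d : ℤ) - 1 →
    T r i (N - t) = 0
  hP : ∀ i, ∀ k : ℤ, 0 ≤ k → k ≤ N →
    P i (k - 1) = ∑ j, S.Pr i j • (S.Q + (S.A j)ᵀ * (P j k - P0 j k) * S.A j)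
  hP0 : ∀ i, ∀ k : ℤ, 0 ≤ k → k ≤ N →
    P0 i (k - 1) = (T0 i (k - 1))ᵀ * (W i (k - 1))⁻¹ * T0 i (k - 1)
  hW : ∀ i, ∀ k : ℤ, 0 ≤ k → k ≤ N →
    W i (k - S.d) =
      S.expect i S.d (fun j =>
        (S.Bget j (S.d - 1))ᵀ * (P (S.pget j (S.d - 1)) k - P0 (S.pget j (S.d - 1)) k) *
          S.Bget j (S.d - 1) + S.R)
      - ∑ s ∈ Finset.Icc 1 (S.d - 1),
          S.expect i (S.d - s) (fun j =>
            (T s (S.pget j (S.d - s - 1)) (k - s))ᵀ * (W (S.pget j (S.d - s - 1)) (k - s))⁻¹ *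
              T s (S.pget j (S.d - s - 1)) (k - s))
  hT0 : ∀ i, ∀ k : ℤ, 0 ≤ k → k ≤ N →
    T0 i (k - S.d) =
      S.expect i S.d (fun j =>
        (S.Bget j (S.d - 1))ᵀ * (P (S.pget j (S.d - 1)) k - P0 (S.pget j (S.d - 1)) k) *
          S.Aprod j 0 S.d)
      - ∑ s ∈ Finset.Icc 1 (S.d - 1),
          S.expect i (S.d - s) (fun j =>
            (T s (S.pget j (S.d - s - 1)) (k - s))ᵀ * (W (S.pget j (S.d - s - 1)) (k - s))⁻¹ *
              T0 (S.pget j (S.d - s - 1)) (k - s) * S.Aprod j 0 (S.d - s))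
  hT : ∀ r : ℕ, 1 ≤ r → r ≤ S.d - 1 → ∀ i, ∀ k : ℤ, 0 ≤ k → k ≤ N →
    T r i (k - S.d) =
      S.expect i S.d (fun j =>
        (S.Bget j (S.d - 1))ᵀ * (P (S.pget j (S.d - 1)) k - P0 (S.pget j (S.d - 1)) k) *
          (S.Aprod j r (S.d - r) * S.Bget j (r - 1)))
      - ∑ s ∈ Finset.Icc 1 (S.d - r),
          S.expect i (S.d - s) (fun j =>
            (T s (S.pget j (S.d - s - 1)) (k - s))ᵀ * (W (S.pget j (S.d - s - 1)) (k - s))⁻¹ *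
              T0 (S.pget j (S.d - s - 1)) (k - s) * (S.Aprod j r (S.d - s - r) * S.Bget j (r - 1)))
      - ∑ s ∈ Finset.Icc (S.d - r + 1) (S.d - 1),
          S.expect i (S.d - s) (fun j =>
            (T s (S.pget j (S.d - s - 1)) (k - s))ᵀ * (W (S.pget j (S.d - s - 1)) (k - s))⁻¹ *
              T (s - (S.d - r)) (S.pget j (S.d - s - 1)) (k - s))

/-- The CDRE together with the auxiliary quantities `δ` and (path-indexed) `α`. -/
structure CDREX (S : MJParams) (N : ℤ) extends CDRE S N where
  δ : ℕ → Fin S.L → ℤ → Matrix (Fin S.m) (Fin S.n) ℝ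
  α : (s : ℕ) → (Fin s → Fin S.L) → ℤ → Matrix (Fin S.m) (Fin S.n) ℝ
  hδterm : ∀ r i, ∀ t : ℤ, N - 1 ≤ t → δ r i t = 0
  hδ1 : 1 ≤ S.d - 1 → ∀ i, ∀ k : ℤ, 0 ≤ k → k ≤ N →
    (δ 1 i (k - 1))ᵀ = (∑ j, S.Pr i j • ((S.A j)ᵀ * (P j k - P0 j k) * S.B j))
      - (T0 i (k - 1))ᵀ * (W i (k - 1))⁻¹ * T 1 i (k - 1)
  hδr : ∀ r : ℕ, 2 ≤ r → r ≤ S.d - 1 → ∀ i, ∀ k : ℤ, 0 ≤ k → k ≤ N →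
    (δ r i (k - 1))ᵀ = (∑ j, S.Pr i j • ((S.A j)ᵀ * (δ (r - 1) j k)ᵀ))
      - (T0 i (k - 1))ᵀ * (W i (k - 1))⁻¹ * T r i (k - 1)
  hα1 : 1 ≤ S.d - 1 → ∀ (p : Fin 1 → Fin S.L) (t : ℤ), α 1 p t = δ (S.d - 1) (p 0) t
  hαj : ∀ jj : ℕ, 2 ≤ jj → jj ≤ S.d - 1 → ∀ (p : Fin jj → Fin S.L), ∀ k : ℤ, 0 ≤ k → k ≤ N →
    (α jj p (k - 1))ᵀ = (δ (S.d - jj) (S.pget p 0) (k - 1))ᵀ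
      - ∑ s ∈ Finset.Icc 1 (jj - 1),
          (α s (fun t : Fin s => S.pget p (t : ℕ)) (k - 1))ᵀ *
            (W (S.pget p s) (k - 1 - s))⁻¹ * T (S.d - jj + s) (S.pget p s) (k - 1 - s)

/-- The matrix `Ω_{(i₁,…,i_d)}(t, N)` associated with a solution of the CDRE. -/
def CDREX.Omega {S : MJParams} {N : ℤ} (c : CDREX S N) (p : Fin S.d → Fin S.L) (t : ℤ) :
    Matrix (Fin S.n) (Fin S.n) ℝ :=
  (c.P (S.pget p 0) t - c.P0 (S.pget p 0) t)
    - ∑ s ∈ Finset.Icc 1 (S.d - 1),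
        (c.α s (fun r : Fin s => S.pget p (r : ℕ)) t)ᵀ * (c.W (S.pget p s) (t - s))⁻¹ *
          c.α s (fun r : Fin s => S.pget p (r : ℕ)) t

/-- The coupled algebraic Riccati equation (CARE): the stationary version of the CDRE,
with every `W i` invertible. -/
structure CARE (S : MJParams) where
  P : Fin S.L → Matrix (Fin S.n) (Fin S.n) ℝ
  P0 : Fin S.L → Matrix (Fin S.n) (Fin S.n) ℝ
  W : Fin S.L → Matrix (Fin S.m) (Fin S.m) ℝ
  T0 : Fin S.L → Matrix (Fin S.m) (Fin S.n) ℝ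
  T : ℕ → Fin S.L → Matrix (Fin S.m) (Fin S.m) ℝ
  δ : ℕ → Fin S.L → Matrix (Fin S.m) (Fin S.n) ℝ
  α : (s : ℕ) → (Fin s → Fin S.L) → Matrix (Fin S.m) (Fin S.n) ℝ
  hWunit : ∀ i, IsUnit (W i)
  hP : ∀ i, P i = ∑ j, S.Pr i j • (S.Q + (S.A j)ᵀ * (P j - P0 j) * S.A j)
  hP0 : ∀ i, P0 i = (T0 i)ᵀ * (W i)⁻¹ * T0 i
  hW : ∀ i, W i =
      S.expect i S.d (fun j =>
        (S.Bget j (S.d - 1))ᵀ * (P (S.pget j (S.d - 1)) - P0 (S.pget j (S.d - 1))) *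
          S.Bget j (S.d - 1) + S.R)
      - ∑ s ∈ Finset.Icc 1 (S.d - 1),
          S.expect i (S.d - s) (fun j =>
            (T s (S.pget j (S.d - s - 1)))ᵀ * (W (S.pget j (S.d - s - 1)))⁻¹ *
              T s (S.pget j (S.d - s - 1)))
  hT0 : ∀ i, T0 i =
      S.expect i S.d (fun j =>
        (S.Bget j (S.d - 1))ᵀ * (P (S.pget j (S.d - 1)) - P0 (S.pget j (S.d - 1))) *
          S.Aprod j 0 S.d)
      - ∑ s ∈ Finset.Icc 1 (S.d - 1),
          S.expect i (S.d - s) (fun j =>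
            (T s (S.pget j (S.d - s - 1)))ᵀ * (W (S.pget j (S.d - s - 1)))⁻¹ *
              T0 (S.pget j (S.d - s - 1)) * S.Aprod j 0 (S.d - s))
  hT : ∀ r : ℕ, 1 ≤ r → r ≤ S.d - 1 → ∀ i, T r i =
      S.expect i S.d (fun j =>
        (S.Bget j (S.d - 1))ᵀ * (P (S.pget j (S.d - 1)) - P0 (S.pget j (S.d - 1))) *
          (S.Aprod j r (S.d - r) * S.Bget j (r - 1)))
      - ∑ s ∈ Finset.Icc 1 (S.d - r),
          S.expect i (S.d - s) (fun j =>
            (T s (S.pget j (S.d - s - 1)))ᵀ * (W (S.pget j (S.d - s - 1)))⁻¹ *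
              T0 (S.pget j (S.d - s - 1)) * (S.Aprod j r (S.d - s - r) * S.Bget j (r - 1)))
      - ∑ s ∈ Finset.Icc (S.d - r + 1) (S.d - 1),
          S.expect i (S.d - s) (fun j =>
            (T s (S.pget j (S.d - s - 1)))ᵀ * (W (S.pget j (S.d - s - 1)))⁻¹ *
              T (s - (S.d - r)) (S.pget j (S.d - s - 1)))
  hδ1 : 1 ≤ S.d - 1 → ∀ i,
    (δ 1 i)ᵀ = (∑ j, S.Pr i j • ((S.A j)ᵀ * (P j - P0 j) * S.B j))
      - (T0 i)ᵀ * (W i)⁻¹ * T 1 i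
  hδr : ∀ r : ℕ, 2 ≤ r → r ≤ S.d - 1 → ∀ i,
    (δ r i)ᵀ = (∑ j, S.Pr i j • ((S.A j)ᵀ * (δ (r - 1) j)ᵀ))
      - (T0 i)ᵀ * (W i)⁻¹ * T r i
  hα1 : 1 ≤ S.d - 1 → ∀ (p : Fin 1 → Fin S.L), α 1 p = δ (S.d - 1) (p 0)
  hαj : ∀ jj : ℕ, 2 ≤ jj → jj ≤ S.d - 1 → ∀ (p : Fin jj → Fin S.L),
    (α jj p)ᵀ = (δ (S.d - jj) (S.pget p 0))ᵀ
      - ∑ s ∈ Finset.Icc 1 (jj - 1),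
          (α s (fun t : Fin s => S.pget p (t : ℕ)))ᵀ * (W (S.pget p s))⁻¹ *
            T (S.d - jj + s) (S.pget p s)

/-- The matrix `Ω_{(i₁,…,i_d)}` associated with a solution of the CARE. -/
def CARE.Omega {S : MJParams} (c : CARE S) (p : Fin S.d → Fin S.L) :
    Matrix (Fin S.n) (Fin S.n) ℝ :=
  (c.P (S.pget p 0) - c.P0 (S.pget p 0))
    - ∑ s ∈ Finset.Icc 1 (S.d - 1),
        (c.α s (fun r : Fin s => S.pget p (r : ℕ)))ᵀ * (c.W (S.pget p s))⁻¹ *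
          c.α s (fun r : Fin s => S.pget p (r : ℕ))

/-- A probability space carrying a time-homogeneous Markov chain with values in
`{1,…,L}` and transition matrix `Pr`. -/
structure MarkovChain (S : MJParams) (Ω : Type) [MeasurableSpace Ω] where
  μ : Measure Ω
  hμ : IsProbabilityMeasure μ
  θ : ℕ → Ω → Fin S.L
  hθ : ∀ k, Measurable (θ k)
  hmarkov : ∀ (k : ℕ) (i : ℕ → Fin S.L) (j : Fin S.L),
    0 < μ (⋂ t ∈ Finset.range (k + 1), {ω | θ t ω = i t}) →
    μ ({ω | θ (k + 1) ω = j} ∩ ⋂ t ∈ Finset.range (k + 1), {ω | θ t ω = i t})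
      = ENNReal.ofReal (S.Pr (i k) j) * μ (⋂ t ∈ Finset.range (k + 1), {ω | θ t ω = i t})

/-- The σ-algebra `G_k` generated by `θ(0), …, θ(k)`. -/
def MarkovChain.G {S : MJParams} {Ω : Type} [MeasurableSpace Ω] (M : MarkovChain S Ω) (k : ℕ) : MeasurableSpace Ω :=
  ⨆ t ∈ Finset.range (k + 1), MeasurableSpace.comap (M.θ t) ⊤

/-- The state trajectory of the MJLS with input delay, given initial state `x0` and
input process `u` (defined for all integer times; negative times carry the initial inputs). -/
def traj (S : MJParams) {Ω : Type} [MeasurableSpace Ω] (M : MarkovChain S Ω) (x0 : Fin S.n → ℝ)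
    (u : ℤ → Ω → Fin S.m → ℝ) : ℕ → Ω → Fin S.n → ℝ
  | 0 => fun _ => x0
  | k + 1 => fun ω =>
      (S.A (M.θ k ω)).mulVec (traj S M x0 u k ω)
        + (S.B (M.θ k ω)).mulVec (u ((k : ℤ) - S.d) ω)

/-- The input process `u` carries the prescribed initial data on `[-d, -1]`. -/
def HasInit (S : MJParams) {Ω : Type} [MeasurableSpace Ω] (M : MarkovChain S Ω) (uinit : ℤ → Fin S.m → ℝ)
    (u : ℤ → Ω → Fin S.m → ℝ) : Prop :=
  ∀ t : ℤ, -(S.d : ℤ) ≤ t → t < 0 → u t = fun _ => uinit t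

/-- `u` is the closed loop input under the delayed feedback
`u(k) = -K⁰_{θ(k)} x(k) - ∑_{r=1}^{d-1} K^r_{θ(k)} u(k+r-d)`. -/
def IsFeedback (S : MJParams) {Ω : Type} [MeasurableSpace Ω] (M : MarkovChain S Ω)
    (K0 : Fin S.L → Matrix (Fin S.m) (Fin S.n) ℝ)
    (K : ℕ → Fin S.L → Matrix (Fin S.m) (Fin S.m) ℝ)
    (x0 : Fin S.n → ℝ) (uinit : ℤ → Fin S.m → ℝ)
    (u : ℤ → Ω → Fin S.m → ℝ) : Prop :=
  HasInit S M uinit u ∧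
  ∀ k : ℕ, u (k : ℤ) = fun ω =>
    -((K0 (M.θ k ω)).mulVec (traj S M x0 u k ω))
      - ∑ r ∈ Finset.Icc 1 (S.d - 1), (K r (M.θ k ω)).mulVec (u ((k : ℤ) + r - S.d) ω)

/-- Mean square stabilizability of the MJLS with input delay. -/
def MJParams.MSStabilizable (S : MJParams) : Prop :=
  ∃ (K0 : Fin S.L → Matrix (Fin S.m) (Fin S.n) ℝ)
    (K : ℕ → Fin S.L → Matrix (Fin S.m) (Fin S.m) ℝ),
    ∀ {Ω : Type} [MeasurableSpace Ω] (M : MarkovChain S Ω) (x0 : Fin S.n → ℝ) (uinit : ℤ → Fin S.m → ℝ)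
      (u : ℤ → Ω → Fin S.m → ℝ), IsFeedback S M K0 K x0 uinit u →
      Tendsto (fun k : ℕ => ∫ ω, (∑ i, (traj S M x0 u k ω i) ^ 2) ∂M.μ) atTop (𝓝 0)

/-- The uncontrolled trajectory `x(k+1) = A_{θ(k)} x(k)`. -/
def trajU (S : MJParams) {Ω : Type} [MeasurableSpace Ω] (M : MarkovChain S Ω) (x0 : Fin S.n → ℝ) :
    ℕ → Ω → Fin S.n → ℝ
  | 0 => fun _ => x0
  | k + 1 => fun ω => (S.A (M.θ k ω)).mulVec (trajU S M x0 k ω)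

/-- Exact observability of `(A, C)`. -/
def MJParams.ExactlyObservable (S : MJParams) {p : ℕ}
    (C : Matrix (Fin p) (Fin S.n) ℝ) : Prop :=
  ∀ N : ℕ, S.n ≤ N → ∀ {Ω : Type} [MeasurableSpace Ω] (M : MarkovChain S Ω) (i0 : Fin S.L),
    M.μ {ω | M.θ 0 ω = i0} = 1 →
    ∀ x0 : Fin S.n → ℝ,
      (∀ k ≤ N, ∀ᵐ ω ∂M.μ, C.mulVec (trajU S M x0 k ω) = 0) → x0 = 0

/-- `u` is the closed-loop input under the stationary feedback controller `u*` built from a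
CARE solution. -/
def IsCareFeedback (S : MJParams) {Ω : Type} [MeasurableSpace Ω] (M : MarkovChain S Ω) (c : CARE S)
    (x0 : Fin S.n → ℝ) (uinit : ℤ → Fin S.m → ℝ)
    (u : ℤ → Ω → Fin S.m → ℝ) : Prop :=
  HasInit S M uinit u ∧
  ∀ k : ℕ, u (k : ℤ) = fun ω =>
    -(((c.W (M.θ k ω))⁻¹ * c.T0 (M.θ k ω) * S.A (M.θ k ω)).mulVec (traj S M x0 u k ω))
      - ((c.W (M.θ k ω))⁻¹ * c.T0 (M.θ k ω) * S.B (M.θ k ω)).mulVec (u ((k : ℤ) - S.d) ω)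
      - ∑ j ∈ Finset.Icc 1 (S.d - 1),
          ((c.W (M.θ k ω))⁻¹ * c.T j (M.θ k ω)).mulVec (u ((k : ℤ) - S.d + j) ω)

/-- The infinite-horizon cost `J(u)` (valued in `ℝ≥0∞`). -/
def Jinf (S : MJParams) {Ω : Type} [MeasurableSpace Ω] (M : MarkovChain S Ω) (x0 : Fin S.n → ℝ)
    (u : ℤ → Ω → Fin S.m → ℝ) : ℝ≥0∞ :=
  (∑' k : ℕ, ENNReal.ofReal
      (∫ ω, (traj S M x0 u k ω) ⬝ᵥ (S.Q.mulVec (traj S M x0 u k ω)) ∂M.μ))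
  + ∑' k : ℕ, ENNReal.ofReal
      (∫ ω, (u (k : ℤ) ω) ⬝ᵥ (S.R.mulVec (u (k : ℤ) ω)) ∂M.μ)

/-- The finite-horizon cost `J_N(u)`. -/
def Jfin (S : MJParams) {Ω : Type} [MeasurableSpace Ω] (M : MarkovChain S Ω) (N : ℕ) (x0 : Fin S.n → ℝ)
    (u : ℤ → Ω → Fin S.m → ℝ) : ℝ :=
  ∫ ω, ((∑ k ∈ Finset.range (N + 1),
        (traj S M x0 u k ω) ⬝ᵥ (S.Q.mulVec (traj S M x0 u k ω)))
      + ∑ k ∈ Finset.Icc S.d N,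
        (u ((k : ℤ) - S.d) ω) ⬝ᵥ (S.R.mulVec (u ((k : ℤ) - S.d) ω))) ∂M.μ

/-- The Lyapunov functional `V(k)` associated with a CARE solution and an input process. -/
def Vfun (S : MJParams) {Ω : Type} [MeasurableSpace Ω] (M : MarkovChain S Ω) (c : CARE S) (x0 : Fin S.n → ℝ)
    (u : ℤ → Ω → Fin S.m → ℝ) (k : ℕ) : ℝ :=
  (∫ ω, (traj S M x0 u k ω) ⬝ᵥ
      ((c.P (M.θ (k - 1) ω) - c.P0 (M.θ (k - 1) ω)).mulVec (traj S M x0 u k ω)) ∂M.μ)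
  - ∑ s ∈ Finset.Icc 1 (S.d - 1),
      ∫ ω,
        (condExp (M.G (k - s - 1)) M.μ
            (fun ω' => (c.α s (fun t : Fin s => M.θ (k - 1 - (t : ℕ)) ω')).mulVec
              (traj S M x0 u k ω')) ω)
          ⬝ᵥ ((c.W (M.θ (k - s - 1) ω))⁻¹.mulVec
            (condExp (M.G (k - s - 1)) M.μ
              (fun ω' => (c.α s (fun t : Fin s => M.θ (k - 1 - (t : ℕ)) ω')).mulVec
                (traj S M x0 u k ω')) ω)) ∂M.μ

/-- Index type for the augmented state `col(x(k), u(k-1), …, u(k-d))`: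
`inl` is the state block (block `0`), `inr (t, ·)` is block `t+1` (holding `u(k-t-1)`). -/
abbrev AugIx (S : MJParams) : Type := Fin S.n ⊕ (Fin S.d × Fin S.m)

/-- The augmented system matrix `Ā_i`. -/
def Abar (S : MJParams) (i : Fin S.L) : Matrix (AugIx S) (AugIx S) ℝ :=
  Matrix.of fun a b =>
    match a, b with
    | Sum.inl a, Sum.inl b => S.A i a b
    | Sum.inl a, Sum.inr (t, b) => if (t : ℕ) = S.d - 1 then S.B i a b else 0
    | Sum.inr _, Sum.inl _ => 0
    | Sum.inr (t, a), Sum.inr (s, b) => if (t : ℕ) = (s : ℕ) + 1 ∧ a = b then 1 else 0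

/-- The augmented input matrix `B̄`. -/
def Bbar (S : MJParams) : Matrix (AugIx S) (Fin S.m) ℝ :=
  Matrix.of fun a b =>
    match a with
    | Sum.inl _ => 0
    | Sum.inr (t, a) => if (t : ℕ) = 0 ∧ a = b then 1 else 0

/-- The augmented weight matrix `Q̄ = diag(Q, 0, …, 0)`. -/
def Qbar (S : MJParams) : Matrix (AugIx S) (AugIx S) ℝ :=
  Matrix.of fun a b =>
    match a, b with
    | Sum.inl a, Sum.inl b => S.Q a b
    | _, _ => 0

/-- The augmented coupled Riccati recursion with horizon `N`. -/
structure AugRic (S : MJParams) (N : ℕ) where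
  Pb : Fin S.L → ℕ → Matrix (AugIx S) (AugIx S) ℝ
  hterm : ∀ i, Pb i (N + 1) = 0
  hrec : ∀ i, ∀ k ≤ N, Pb i k =
    Qbar S + (Abar S i)ᵀ * (∑ j, S.Pr i j • Pb j (k + 1)) * Abar S i
      - ((Bbar S)ᵀ * (∑ j, S.Pr i j • Pb j (k + 1)) * Abar S i)ᵀ *
          (S.R + (Bbar S)ᵀ * (∑ j, S.Pr i j • Pb j (k + 1)) * Bbar S)⁻¹ *
          ((Bbar S)ᵀ * (∑ j, S.Pr i j • Pb j (k + 1)) * Abar S i)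

/-- `Ῡ_i(k)` of the augmented recursion. -/
def AugRic.Ups {S : MJParams} {N : ℕ} (a : AugRic S N) (i : Fin S.L) (k : ℕ) :
    Matrix (Fin S.m) (Fin S.m) ℝ :=
  S.R + (Bbar S)ᵀ * (∑ j, S.Pr i j • a.Pb j (k + 1)) * Bbar S

/-- Block `(1,0)` of an augmented matrix. -/
def blk10 (S : MJParams) (Pm : Matrix (AugIx S) (AugIx S) ℝ) :
    Matrix (Fin S.m) (Fin S.n) ℝ :=
  Matrix.of fun a b => Pm (Sum.inr (⟨0, S.hd⟩, a)) (Sum.inl b)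

/-- Block `(1,1)` of an augmented matrix. -/
def blk11 (S : MJParams) (Pm : Matrix (AugIx S) (AugIx S) ℝ) :
    Matrix (Fin S.m) (Fin S.m) ℝ :=
  Matrix.of fun a b => Pm (Sum.inr (⟨0, S.hd⟩, a)) (Sum.inr (⟨0, S.hd⟩, b))

/-- Block `(1, r+1)` of an augmented matrix (for `r < d`). -/
def blk1c (S : MJParams) (Pm : Matrix (AugIx S) (AugIx S) ℝ) (r : ℕ) :
    Matrix (Fin S.m) (Fin S.m) ℝ :=
  Matrix.of fun a b =>
    Pm (Sum.inr (⟨0, S.hd⟩, a)) (Sum.inr (if h : r < S.d then ⟨r, h⟩ else ⟨0, S.hd⟩, b))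

/-- The initial augmented state `col(x₀, u(-1), …, u(-d))`. -/
def augInit (S : MJParams) (x0 : Fin S.n → ℝ) (uinit : ℤ → Fin S.m → ℝ) :
    AugIx S → ℝ :=
  fun a =>
    match a with
    | Sum.inl a => x0 a
    | Sum.inr (t, b) => uinit (-(t : ℤ) - 1) b

end

set_option maxHeartbeats 4000000 in
theorem cdre_key (S : MJParams) {N N' : ℤ} (hN : (S.d : ℤ) ≤ N) (hN' : (S.d : ℤ) ≤ N')
    (c : CDRE S N) (c' : CDRE S N') :
    ∀ ν : ℕ,
      (∀ i : Fin S.L, (ν : ℤ) ≤ N + 1 → (ν : ℤ) ≤ N' + 1 →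
        c.P i (N - ν) = c'.P i (N' - ν) ∧ c.P0 i (N - ν) = c'.P0 i (N' - ν)) ∧
      (∀ i : Fin S.L, (S.d : ℤ) ≤ (ν : ℤ) → (ν : ℤ) ≤ N + S.d → (ν : ℤ) ≤ N' + S.d →
        c.W i (N - ν) = c'.W i (N' - ν) ∧ c.T0 i (N - ν) = c'.T0 i (N' - ν) ∧
        ∀ r : ℕ, 1 ≤ r → r ≤ S.d - 1 → c.T r i (N - ν) = c'.T r i (N' - ν)) := by
  intro ν
  induction ν using Nat.strong_induction_on with
  | _ ν IH =>
    have hd1 : 1 ≤ S.d := S.hd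
    have part2 : ∀ i : Fin S.L, (S.d : ℤ) ≤ (ν : ℤ) → (ν : ℤ) ≤ N + S.d →
        (ν : ℤ) ≤ N' + S.d →
        c.W i (N - ν) = c'.W i (N' - ν) ∧ c.T0 i (N - ν) = c'.T0 i (N' - ν) ∧
        ∀ r : ℕ, 1 ≤ r → r ≤ S.d - 1 → c.T r i (N - ν) = c'.T r i (N' - ν) := by
      intro i hνd hνN hνN'
      have e1 : ∀ l : Fin S.L, c.P l (N - ν + S.d) = c'.P l (N' - ν + S.d) ∧
          c.P0 l (N - ν + S.d) = c'.P0 l (N' - ν + S.d) := by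
        intro l
        have h := (IH (ν - S.d) (by omega)).1 l (by omega) (by omega)
        rw [show (N : ℤ) - ((ν - S.d : ℕ) : ℤ) = N - ν + S.d from by omega,
            show (N' : ℤ) - ((ν - S.d : ℕ) : ℤ) = N' - ν + S.d from by omega] at h
        exact h
      have hcase : ∀ s : ℕ, 1 ≤ s → s ≤ S.d - 1 →
          (∀ (l : Fin S.L) (r' : ℕ), 1 ≤ r' → r' ≤ S.d - 1 →
            c.T r' l (N - ν + S.d - s) = 0 ∧ c'.T r' l (N' - ν + S.d - s) = 0) ∨
          (∀ l : Fin S.L, c.W l (N - ν + S.d - s) = c'.W l (N' - ν + S.d - s) ∧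
            c.T0 l (N - ν + S.d - s) = c'.T0 l (N' - ν + S.d - s) ∧
            ∀ r' : ℕ, 1 ≤ r' → r' ≤ S.d - 1 →
              c.T r' l (N - ν + S.d - s) = c'.T r' l (N' - ν + S.d - s)) := by
        intro s hs1 hs2
        by_cases hm : ν - S.d + s ≤ S.d - 1
        · left
          intro l r' hr1 hr2
          constructor
          · have h := c.hTterm r' hr1 hr2 l ((ν - S.d + s : ℕ) : ℤ) (by omega) (by omega)
            rw [show (N : ℤ) - ((ν - S.d + s : ℕ) : ℤ) = N - ν + S.d - s from by omega] at h
            exact h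
          · have h := c'.hTterm r' hr1 hr2 l ((ν - S.d + s : ℕ) : ℤ) (by omega) (by omega)
            rw [show (N' : ℤ) - ((ν - S.d + s : ℕ) : ℤ) = N' - ν + S.d - s from by omega] at h
            exact h
        · right
          intro l
          have h := (IH (ν - S.d + s) (by omega)).2 l (by omega) (by omega) (by omega)
          rw [show (N : ℤ) - ((ν - S.d + s : ℕ) : ℤ) = N - ν + S.d - s from by omega,
              show (N' : ℤ) - ((ν - S.d + s : ℕ) : ℤ) = N' - ν + S.d - s from by omega] at h
          exact h
      have eW : c.W i (N - ν) = c'.W i (N' - ν) := by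
        have h1 := c.hW i (N - ν + S.d) (by omega) (by omega)
        rw [show (N : ℤ) - ν + S.d - S.d = N - ν from by ring] at h1
        have h2 := c'.hW i (N' - ν + S.d) (by omega) (by omega)
        rw [show (N' : ℤ) - ν + S.d - S.d = N' - ν from by ring] at h2
        rw [h1, h2]
        congr 1
        · unfold MJParams.expect
          refine Finset.sum_congr rfl fun j _ => ?_
          simp only [(e1 (S.pget j (S.d - 1))).1, (e1 (S.pget j (S.d - 1))).2]
        · refine Finset.sum_congr rfl fun s hs => ?_
          simp only [Finset.mem_Icc] at hs
          unfold MJParams.expect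
          refine Finset.sum_congr rfl fun j _ => ?_
          rcases hcase s hs.1 hs.2 with h | h
          · simp only [(h (S.pget j (S.d - s - 1)) s hs.1 hs.2).1,
                (h (S.pget j (S.d - s - 1)) s hs.1 hs.2).2, Matrix.transpose_zero,
                Matrix.zero_mul, Matrix.mul_zero]
          · simp only [(h (S.pget j (S.d - s - 1))).1, (h (S.pget j (S.d - s - 1))).2.2 s hs.1 hs.2]
      have eT0 : c.T0 i (N - ν) = c'.T0 i (N' - ν) := by
        have h1 := c.hT0 i (N - ν + S.d) (by omega) (by omega)
        rw [show (N : ℤ) - ν + S.d - S.d = N - ν from by ring] at h1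
        have h2 := c'.hT0 i (N' - ν + S.d) (by omega) (by omega)
        rw [show (N' : ℤ) - ν + S.d - S.d = N' - ν from by ring] at h2
        rw [h1, h2]
        congr 1
        · unfold MJParams.expect
          refine Finset.sum_congr rfl fun j _ => ?_
          simp only [(e1 (S.pget j (S.d - 1))).1, (e1 (S.pget j (S.d - 1))).2]
        · refine Finset.sum_congr rfl fun s hs => ?_
          simp only [Finset.mem_Icc] at hs
          unfold MJParams.expect
          refine Finset.sum_congr rfl fun j _ => ?_
          rcases hcase s hs.1 hs.2 with h | h
          · simp only [(h (S.pget j (S.d - s - 1)) s hs.1 hs.2).1,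
                (h (S.pget j (S.d - s - 1)) s hs.1 hs.2).2, Matrix.transpose_zero,
                Matrix.zero_mul, Matrix.mul_zero]
          · simp only [(h (S.pget j (S.d - s - 1))).1, (h (S.pget j (S.d - s - 1))).2.1,
                (h (S.pget j (S.d - s - 1))).2.2 s hs.1 hs.2]
      have eT : ∀ r : ℕ, 1 ≤ r → r ≤ S.d - 1 → c.T r i (N - ν) = c'.T r i (N' - ν) := by
        intro r hr1 hr2
        have h1 := c.hT r hr1 hr2 i (N - ν + S.d) (by omega) (by omega)
        rw [show (N : ℤ) - ν + S.d - S.d = N - ν from by ring] at h1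
        have h2 := c'.hT r hr1 hr2 i (N' - ν + S.d) (by omega) (by omega)
        rw [show (N' : ℤ) - ν + S.d - S.d = N' - ν from by ring] at h2
        rw [h1, h2]
        congr 1
        · congr 1
          · unfold MJParams.expect
            refine Finset.sum_congr rfl fun j _ => ?_
            simp only [(e1 (S.pget j (S.d - 1))).1, (e1 (S.pget j (S.d - 1))).2]
          · refine Finset.sum_congr rfl fun s hs => ?_
            simp only [Finset.mem_Icc] at hs
            have hs2' : s ≤ S.d - 1 := by omega
            unfold MJParams.expect
            refine Finset.sum_congr rfl fun j _ => ?_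
            rcases hcase s hs.1 hs2' with h | h
            · simp only [(h (S.pget j (S.d - s - 1)) s hs.1 hs2').1,
                  (h (S.pget j (S.d - s - 1)) s hs.1 hs2').2, Matrix.transpose_zero,
                  Matrix.zero_mul, Matrix.mul_zero]
            · simp only [(h (S.pget j (S.d - s - 1))).1, (h (S.pget j (S.d - s - 1))).2.1,
                  (h (S.pget j (S.d - s - 1))).2.2 s hs.1 hs2']
        · refine Finset.sum_congr rfl fun s hs => ?_
          simp only [Finset.mem_Icc] at hs
          have hs1' : 1 ≤ s := by omega
          unfold MJParams.expect
          refine Finset.sum_congr rfl fun j _ => ?_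
          rcases hcase s hs1' hs.2 with h | h
          · simp only [(h (S.pget j (S.d - s - 1)) s hs1' hs.2).1,
                (h (S.pget j (S.d - s - 1)) s hs1' hs.2).2, Matrix.transpose_zero,
                Matrix.zero_mul, Matrix.mul_zero]
          · simp only [(h (S.pget j (S.d - s - 1))).1, (h (S.pget j (S.d - s - 1))).2.2 s hs1' hs.2,
                (h (S.pget j (S.d - s - 1))).2.2 (s - (S.d - r)) (by omega) (by omega)]
      exact ⟨eW, eT0, eT⟩
    have part1 : ∀ i : Fin S.L, (ν : ℤ) ≤ N + 1 → (ν : ℤ) ≤ N' + 1 →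
        c.P i (N - ν) = c'.P i (N' - ν) ∧ c.P0 i (N - ν) = c'.P0 i (N' - ν) := by
      intro i hν1 hν2
      have hP0eq : c.P0 i (N - ν) = c'.P0 i (N' - ν) := by
        by_cases hsm : ν ≤ S.d - 1
        · rw [c.hP0term i ν (by omega) (by omega), c'.hP0term i ν (by omega) (by omega)]
        · have h1 := c.hP0 i (N - ν + 1) (by omega) (by omega)
          rw [show (N : ℤ) - ν + 1 - 1 = N - ν from by ring] at h1
          have h2 := c'.hP0 i (N' - ν + 1) (by omega) (by omega)
          rw [show (N' : ℤ) - ν + 1 - 1 = N' - ν from by ring] at h2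
          obtain ⟨eW, eT0, -⟩ := part2 i (by omega) (by omega) (by omega)
          rw [h1, h2, eW, eT0]
      have hPeq : c.P i (N - ν) = c'.P i (N' - ν) := by
        rcases Nat.eq_zero_or_pos ν with h0 | hpos
        · subst h0
          simp only [Nat.cast_zero, sub_zero]
          rw [c.hPterm, c'.hPterm]
        · have h1 := c.hP i (N - ν + 1) (by omega) (by omega)
          rw [show (N : ℤ) - ν + 1 - 1 = N - ν from by ring] at h1
          have h2 := c'.hP i (N' - ν + 1) (by omega) (by omega)
          rw [show (N' : ℤ) - ν + 1 - 1 = N' - ν from by ring] at h2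
          have e' : ∀ l : Fin S.L, c.P l (N - ν + 1) = c'.P l (N' - ν + 1) ∧
              c.P0 l (N - ν + 1) = c'.P0 l (N' - ν + 1) := by
            intro l
            have h := (IH (ν - 1) (by omega)).1 l (by omega) (by omega)
            rw [show (N : ℤ) - ((ν - 1 : ℕ) : ℤ) = N - ν + 1 from by omega,
                show (N' : ℤ) - ((ν - 1 : ℕ) : ℤ) = N' - ν + 1 from by omega] at h
            exact h
          rw [h1, h2]
          exact Finset.sum_congr rfl fun j _ => by simp only [(e' j).1, (e' j).2]
      exact ⟨hPeq, hP0eq⟩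
    exact ⟨part1, part2⟩

set_option maxHeartbeats 1000000 in
theorem stmt1 (S : MJParams) (hR : S.R.PosDef) (hQ : S.Q.PosSemidef)
    (N N' : ℤ) (hN : (S.d : ℤ) ≤ N) (hN' : (S.d : ℤ) ≤ N')
    (c : CDRE S N) (c' : CDRE S N') (i : Fin S.L) (t t' : ℤ)
    (hshift : N - t = N' - t') :
    (-1 ≤ t → t ≤ N → -1 ≤ t' → t' ≤ N' →
      c.P i t = c'.P i t' ∧ c.P0 i t = c'.P0 i t') ∧
    (-(S.d : ℤ) ≤ t → t ≤ N - S.d → -(S.d : ℤ) ≤ t' → t' ≤ N' - S.d →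
      c.W i t = c'.W i t' ∧ c.T0 i t = c'.T0 i t' ∧
      ∀ r : ℕ, 1 ≤ r → r ≤ S.d - 1 → c.T r i t = c'.T r i t') := by
  constructor
  · intro h1 h2 h3 h4
    have hν0 : 0 ≤ N - t := by omega
    have hν : (((N - t).toNat : ℕ) : ℤ) = N - t := Int.toNat_of_nonneg hν0
    have H := (cdre_key S hN hN' c c' (N - t).toNat).1 i (by omega) (by omega)
    rw [show N - (((N - t).toNat : ℕ) : ℤ) = t from by omega,
        show N' - (((N - t).toNat : ℕ) : ℤ) = t' from by omega] at H
    exact H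
  · intro h1 h2 h3 h4
    have hν0 : 0 ≤ N - t := by omega
    have hν : (((N - t).toNat : ℕ) : ℤ) = N - t := Int.toNat_of_nonneg hν0
    have H := (cdre_key S hN hN' c c' (N - t).toNat).2 i (by omega) (by omega) (by omega)
    rw [show N - (((N - t).toNat : ℕ) : ℤ) = t from by omega,
        show N' - (((N - t).toNat : ℕ) : ℤ) = t' from by omega] at H
    exact H
end

section
/- Assume d ≥ 2, R is positive definite and Q is positive semidefinite, and let N ≥ d. Then the CDRE and α quantities satisfy, for every mode i ∈ {1,…,L} and every integer k with 0 ≤ k ≤ N−d+1: Σ_{j=1}^{L} λ_{ij} A_j′ α^{d−1}_{(j)}(k, N)′ = T_i^0(k−1, N)′ and Σ_{j=1}^{L} λ_{ij} B_j′ α^{d−1}_{(j)}(k, N)′ = T_i^1(k−1, N)′. -/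
open MeasureTheory Filter Matrix Topology
open scoped ENNReal

section Aux

open Matrix

namespace MJParams

lemma expect_zero (S : MJParams) (i : Fin S.L) {α : Type*} [AddCommMonoid α] [Module ℝ α]
    (f : (Fin 0 → Fin S.L) → α) (p : Fin 0 → Fin S.L) : S.expect i 0 f = f p := by
  have hu : (Finset.univ : Finset (Fin 0 → Fin S.L)) = {p} := by
    apply Finset.eq_singleton_iff_unique_mem.2
    exact ⟨Finset.mem_univ _, fun q _ => funext fun t => t.elim0⟩
  rw [MJParams.expect, hu, Finset.sum_singleton]
  have : S.pw i p = 1 := by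
    rw [MJParams.pw]; simp
  rw [this, one_smul]

lemma cons_get (S : MJParams) (j0 : Fin S.L) {s : ℕ} (p : Fin s → Fin S.L) (q : ℕ) (h : q < s + 1) :
    (Fin.cons j0 p : Fin (s+1) → Fin S.L) ⟨q, h⟩ = if hq : q = 0 then j0 else p ⟨q-1, by omega⟩ := by
  cases q with
  | zero => simp
  | succ q =>
      rw [dif_neg (Nat.succ_ne_zero q)]
      have e : (⟨q+1, h⟩ : Fin (s+1)) = Fin.succ ⟨q, by omega⟩ := rfl
      rw [e, Fin.cons_succ]
      congr 1

lemma pw_cons (S : MJParams) (i j0 : Fin S.L) {s : ℕ} (p : Fin s → Fin S.L) :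
    S.pw i (Fin.cons j0 p) = S.Pr i j0 * S.pw j0 p := by
  rw [MJParams.pw, MJParams.pw, Fin.prod_univ_succ]
  refine congrArg₂ (· * ·) ?_ ?_
  · simp
  · apply Finset.prod_congr rfl
    intro t _
    have h1 : ((t.succ : Fin (s+1)) : ℕ) ≠ 0 := by simp
    rw [dif_neg h1, Fin.cons_succ]
    congr 1
    rw [S.cons_get]
    have h2 : ((t.succ : Fin (s+1)) : ℕ) - 1 = (t : ℕ) := by simp
    by_cases ht : (t : ℕ) = 0
    · rw [dif_pos (by omega), dif_pos ht]
    · rw [dif_neg (by omega), dif_neg ht]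
      congr 1

lemma tower (S : MJParams) (i : Fin S.L) {s : ℕ} {α : Type*} [AddCommMonoid α] [Module ℝ α]
    (f : (Fin (s+1) → Fin S.L) → α) :
    S.expect i (s+1) f = ∑ j0, S.Pr i j0 • S.expect j0 s (fun p => f (Fin.cons j0 p)) := by
  rw [MJParams.expect]
  rw [← Equiv.sum_comp (Fin.consEquiv (fun _ => Fin S.L)) (fun j => S.pw i j • f j)]
  rw [Fintype.sum_prod_type]
  apply Finset.sum_congr rfl
  intro j0 _
  rw [MJParams.expect, Finset.smul_sum]
  apply Finset.sum_congr rfl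
  intro p _
  show S.pw i (Fin.cons j0 p) • f (Fin.cons j0 p) = _
  rw [S.pw_cons i j0 p, mul_smul]

lemma expect_transpose (S : MJParams) (i : Fin S.L) {s : ℕ} {m' n' : Type*} [Fintype m'] [Fintype n']
    (f : (Fin s → Fin S.L) → Matrix m' n' ℝ) :
    (S.expect i s f)ᵀ = S.expect i s (fun j => (f j)ᵀ) := by
  rw [MJParams.expect, MJParams.expect, Matrix.transpose_sum]
  exact Finset.sum_congr rfl fun j _ => Matrix.transpose_smul _ _

lemma mul_expect (S : MJParams) (i : Fin S.L) {s : ℕ} {l' m' n' : Type*} [Fintype l'] [Fintype m'] [Fintype n']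
    (M : Matrix l' m' ℝ) (f : (Fin s → Fin S.L) → Matrix m' n' ℝ) :
    M * S.expect i s f = S.expect i s (fun j => M * f j) := by
  rw [MJParams.expect, MJParams.expect, Matrix.mul_sum]
  exact Finset.sum_congr rfl fun j _ => Matrix.mul_smul _ _ _

lemma expect_sub (S : MJParams) (i : Fin S.L) {s : ℕ} {α : Type*} [AddCommGroup α] [Module ℝ α]
    (f g : (Fin s → Fin S.L) → α) :
    S.expect i s (fun j => f j - g j) = S.expect i s f - S.expect i s g := by
  rw [MJParams.expect, MJParams.expect, MJParams.expect, ← Finset.sum_sub_distrib]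
  exact Finset.sum_congr rfl fun j _ => smul_sub _ _ _

lemma expect_congr (S : MJParams) (i : Fin S.L) {s : ℕ} {α : Type*} [AddCommMonoid α] [Module ℝ α]
    {f g : (Fin s → Fin S.L) → α} (h : ∀ j, f j = g j) :
    S.expect i s f = S.expect i s g := by
  rw [MJParams.expect, MJParams.expect]
  exact Finset.sum_congr rfl fun j _ => by rw [h j]

/-- transposed product of `A`s along a path: `ATp j a c = A_{j_a}ᵀ * ⋯ * A_{j_{a+c-1}}ᵀ`. -/
def ATp (S : MJParams) {s : ℕ} (j : Fin s → Fin S.L) (a c : ℕ) : Matrix (Fin S.n) (Fin S.n) ℝ :=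
  ((List.range c).map (fun t => (S.Aget j (a+t))ᵀ)).prod

lemma ATp_zero (S : MJParams) {s : ℕ} (j : Fin s → Fin S.L) (a : ℕ) : S.ATp j a 0 = 1 := rfl

lemma ATp_succ_left (S : MJParams) {s : ℕ} (j : Fin s → Fin S.L) (a c : ℕ) :
    S.ATp j a (c+1) = (S.Aget j a)ᵀ * S.ATp j (a+1) c := by
  rw [ATp, ATp, List.range_succ_eq_map, List.map_cons, List.prod_cons, List.map_map]
  refine congrArg₂ (· * ·) ?_ ?_
  · rw [Nat.add_zero]
  · apply congrArg
    apply List.map_congr_left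
    intro t _
    simp only [Function.comp_apply]
    exact congrArg (fun x => (S.Aget j x)ᵀ) (by omega : a + (t+1) = a + 1 + t)

lemma Aprod_succ (S : MJParams) {s : ℕ} (j : Fin s → Fin S.L) (a c : ℕ) :
    S.Aprod j a (c+1) = S.Aprod j (a+1) c * S.Aget j a := by
  rw [MJParams.Aprod, MJParams.Aprod, List.range_succ, List.map_append, List.prod_append,
    List.map_cons, List.map_nil, List.prod_cons, List.prod_nil, mul_one]
  rw [show a + (c+1) - 1 - c = a by omega]
  congr 1
  apply congrArg
  apply List.map_congr_left
  intro t ht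
  rw [List.mem_range] at ht
  rw [show a + (c+1) - 1 - t = a + 1 + c - 1 - t by omega]

lemma transpose_Aprod (S : MJParams) {s : ℕ} (j : Fin s → Fin S.L) (a c : ℕ) :
    (S.Aprod j a c)ᵀ = S.ATp j a c := by
  induction c generalizing a with
  | zero => rw [MJParams.Aprod]; simp [ATp_zero]
  | succ c ih =>
      rw [S.Aprod_succ j a c, Matrix.transpose_mul, ih (a+1), ATp_succ_left]

lemma pget_cons (S : MJParams) (j0 : Fin S.L) {s : ℕ} (p : Fin s → Fin S.L) (q : ℕ) :
    S.pget (Fin.cons j0 p : Fin (s+1) → Fin S.L) (q+1) = S.pget p q := by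
  rw [MJParams.pget, MJParams.pget]
  by_cases h : q < s
  · rw [dif_pos h, dif_pos (by omega : q+1 < s+1)]
    have e : (⟨q+1, by omega⟩ : Fin (s+1)) = Fin.succ ⟨q, h⟩ := rfl
    rw [e, Fin.cons_succ]
  · rw [dif_neg h, dif_neg (by omega)]

lemma pget_cons_zero (S : MJParams) (j0 : Fin S.L) {s : ℕ} (p : Fin s → Fin S.L) :
    S.pget (Fin.cons j0 p : Fin (s+1) → Fin S.L) 0 = j0 := by
  rw [MJParams.pget, dif_pos (Nat.succ_pos s)]
  exact Fin.cons_zero _ _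

lemma ATp_cons (S : MJParams) (j0 : Fin S.L) {s : ℕ} (p : Fin s → Fin S.L) (a c : ℕ) :
    S.ATp (Fin.cons j0 p : Fin (s+1) → Fin S.L) (a+1) c = S.ATp p a c := by
  rw [ATp, ATp]
  congr 1
  apply List.map_congr_left
  intro t _
  rw [MJParams.Aget, MJParams.Aget]
  rw [show a+1+t = (a+t)+1 by omega, S.pget_cons]

end MJParams

end Aux
section Sym

open Matrix

lemma CDRE.symm_all {S : MJParams} {N : ℤ} (c : CDRE S N) (hd2 : 2 ≤ S.d) (hN : (S.d:ℤ) ≤ N) :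
    ∀ q : ℕ, ∀ t : ℤ, N - t ≤ q → 0 ≤ t →
    (∀ i, t ≤ N - S.d → (c.W i t)ᵀ = c.W i t) ∧
    (∀ i, t ≤ N → (c.P0 i t)ᵀ = c.P0 i t) ∧
    (∀ i, t ≤ N → (c.P i t)ᵀ = c.P i t) := by
  intro q
  induction q using Nat.strong_induction_on with
  | _ q ih =>
    intro t hq ht0
    have IH : ∀ t' : ℤ, t < t' → 0 ≤ t' → t' ≤ N →
        (∀ i, t' ≤ N - S.d → (c.W i t')ᵀ = c.W i t') ∧
        (∀ i, t' ≤ N → (c.P0 i t')ᵀ = c.P0 i t') ∧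
        (∀ i, t' ≤ N → (c.P i t')ᵀ = c.P i t') := by
      intro t' h1 h2 h3
      exact ih (N - t').toNat (by omega) t' (by omega) h2
    have hWsym : ∀ i, t ≤ N - S.d → (c.W i t)ᵀ = c.W i t := by
      intro i htN
      have hrec := c.hW i (t + S.d) (by omega) (by omega)
      rw [show t + (S.d:ℤ) - S.d = t by ring] at hrec
      rw [hrec, Matrix.transpose_sub]
      congr 1
      · rw [S.expect_transpose]
        apply S.expect_congr
        intro j
        have h1 := (IH (t + S.d) (by omega) (by omega) (by omega)).2.1 (S.pget j (S.d-1)) (by omega)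
        have h2 := (IH (t + S.d) (by omega) (by omega) (by omega)).2.2 (S.pget j (S.d-1)) (by omega)
        rw [Matrix.transpose_add, S.hRsymm, Matrix.transpose_mul, Matrix.transpose_mul,
          Matrix.transpose_transpose, Matrix.transpose_sub, h1, h2, Matrix.mul_assoc]
      · rw [Matrix.transpose_sum]
        apply Finset.sum_congr rfl
        intro s hs
        rw [Finset.mem_Icc] at hs
        rw [S.expect_transpose]
        apply S.expect_congr
        intro j
        set i' := S.pget j (S.d - s - 1) with hi'
        by_cases hc : t + (S.d:ℤ) - s ≤ N - S.d
        · have hWs := (IH (t + S.d - s) (by omega) (by omega) (by omega)).1 i' hc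
          rw [Matrix.transpose_mul, Matrix.transpose_mul, Matrix.transpose_transpose,
            Matrix.transpose_nonsing_inv, hWs, Matrix.mul_assoc]
        · have hT0 : c.T s i' (t + (S.d:ℤ) - s) = 0 := by
            rw [show t + (S.d:ℤ) - s = N - (N - (t + S.d - s)) by ring]
            exact c.hTterm s hs.1 hs.2 i' _ (by omega) (by omega)
          rw [hT0]
          simp
    refine ⟨hWsym, ?_, ?_⟩
    · intro i htN
      by_cases hc : t ≤ N - S.d
      · have hrec := c.hP0 i (t + 1) (by omega) (by omega)
        rw [show t + (1:ℤ) - 1 = t by ring] at hrec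
        rw [hrec, Matrix.transpose_mul, Matrix.transpose_mul, Matrix.transpose_transpose,
          Matrix.transpose_nonsing_inv, hWsym i hc, Matrix.mul_assoc]
      · have h0 : c.P0 i t = 0 := by
          rw [show t = N - (N - t) by ring]
          exact c.hP0term i (N - t) (by omega) (by omega)
        rw [h0]; simp
    · intro i htN
      by_cases hc : t = N
      · rw [hc, c.hPterm i]; simp
      · have hrec := c.hP i (t + 1) (by omega) (by omega)
        rw [show t + (1:ℤ) - 1 = t by ring] at hrec
        rw [hrec, Matrix.transpose_sum]
        apply Finset.sum_congr rfl
        intro j _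
        rw [Matrix.transpose_smul]
        congr 1
        have h1 := (IH (t + 1) (by omega) (by omega) (by omega)).2.1 j (by omega)
        have h2 := (IH (t + 1) (by omega) (by omega) (by omega)).2.2 j (by omega)
        rw [Matrix.transpose_add, S.hQsymm, Matrix.transpose_mul, Matrix.transpose_mul,
          Matrix.transpose_transpose, Matrix.transpose_sub, h1, h2, Matrix.mul_assoc]

lemma CDRE.symP {S : MJParams} {N : ℤ} (c : CDRE S N) (hd2 : 2 ≤ S.d) (hN : (S.d:ℤ) ≤ N)
    (i : Fin S.L) (t : ℤ) (h0 : 0 ≤ t) (h1 : t ≤ N) : (c.P i t)ᵀ = c.P i t :=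
  (c.symm_all hd2 hN (N - t).toNat t (by omega) h0).2.2 i h1

lemma CDRE.symP0 {S : MJParams} {N : ℤ} (c : CDRE S N) (hd2 : 2 ≤ S.d) (hN : (S.d:ℤ) ≤ N)
    (i : Fin S.L) (t : ℤ) (h0 : 0 ≤ t) (h1 : t ≤ N) : (c.P0 i t)ᵀ = c.P0 i t :=
  (c.symm_all hd2 hN (N - t).toNat t (by omega) h0).2.1 i h1

lemma CDRE.symW {S : MJParams} {N : ℤ} (c : CDRE S N) (hd2 : 2 ≤ S.d) (hN : (S.d:ℤ) ≤ N)
    (i : Fin S.L) (t : ℤ) (h0 : 0 ≤ t) (h1 : t ≤ N - S.d) : (c.W i t)ᵀ = c.W i t :=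
  (c.symm_all hd2 hN (N - t).toNat t (by omega) h0).1 i h1

end Sym
section Help

open Matrix

namespace MJParams

lemma pget_zero (S : MJParams) {s : ℕ} (q : Fin (s+1) → Fin S.L) : S.pget q 0 = q 0 := by
  rw [MJParams.pget, dif_pos (Nat.succ_pos s)]
  exact congrArg q (Fin.ext rfl)

lemma pget_cons' (S : MJParams) (j0 : Fin S.L) {s : ℕ} (p : Fin s → Fin S.L) {r : ℕ} (h : 1 ≤ r) :
    S.pget (Fin.cons j0 p : Fin (s+1) → Fin S.L) r = S.pget p (r-1) := by
  rw [show r = (r-1)+1 by omega, S.pget_cons, Nat.add_sub_cancel]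

lemma ATp_cons_one (S : MJParams) (j0 : Fin S.L) {s : ℕ} (p : Fin s → Fin S.L) (c : ℕ) :
    S.ATp (Fin.cons j0 p : Fin (s+1) → Fin S.L) 1 c = S.ATp p 0 c := S.ATp_cons j0 p 0 c

lemma Aget_cons_zero (S : MJParams) (j0 : Fin S.L) {s : ℕ} (p : Fin s → Fin S.L) :
    S.Aget (Fin.cons j0 p : Fin (s+1) → Fin S.L) 0 = S.A j0 := by
  rw [MJParams.Aget, S.pget_cons_zero]

lemma Bget_cons_zero (S : MJParams) (j0 : Fin S.L) {s : ℕ} (p : Fin s → Fin S.L) :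
    S.Bget (Fin.cons j0 p : Fin (s+1) → Fin S.L) 0 = S.B j0 := by
  rw [MJParams.Bget, S.pget_cons_zero]

lemma Bget_cons' (S : MJParams) (j0 : Fin S.L) {s : ℕ} (p : Fin s → Fin S.L) {r : ℕ} (h : 1 ≤ r) :
    S.Bget (Fin.cons j0 p : Fin (s+1) → Fin S.L) r = S.Bget p (r-1) := by
  rw [MJParams.Bget, MJParams.Bget, S.pget_cons' j0 p h]

lemma expect_one (S : MJParams) (i : Fin S.L) {α : Type*} [AddCommMonoid α] [Module ℝ α]
    (f : (Fin 1 → Fin S.L) → α) :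
    S.expect i 1 f = ∑ j0, S.Pr i j0 • f (fun _ => j0) := by
  rw [S.tower]
  apply Finset.sum_congr rfl
  intro j0 _
  congr 1
  rw [S.expect_zero _ _ (fun t => t.elim0)]
  congr 1
  funext x
  have hx : x = 0 := by apply Fin.ext; omega
  rw [hx, Fin.cons_zero]

/-- last mode of a truncated path of length `s`, with `i` when `s = 0`. -/
def lastm (S : MJParams) (i : Fin S.L) {s' : ℕ} (j : Fin s' → Fin S.L) (s : ℕ) : Fin S.L :=
  if s = 0 then i else S.pget j (s-1)

lemma lastm_zero (S : MJParams) (i : Fin S.L) {s' : ℕ} (j : Fin s' → Fin S.L) :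
    S.lastm i j 0 = i := rfl

lemma lastm_pos (S : MJParams) (i : Fin S.L) {s' : ℕ} (j : Fin s' → Fin S.L) {s : ℕ} (h : 1 ≤ s) :
    S.lastm i j s = S.pget j (s-1) := by
  rw [lastm, if_neg (by omega)]

lemma lastm_cons (S : MJParams) (i j0 : Fin S.L) {s' : ℕ} (p : Fin s' → Fin S.L) (s : ℕ) :
    S.lastm j0 p s = S.lastm i (Fin.cons j0 p : Fin (s'+1) → Fin S.L) (s+1) := by
  rw [S.lastm_pos i _ (by omega)]
  cases s with
  | zero => rw [lastm, if_pos rfl]; simp [S.pget_zero, Fin.cons_zero]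
  | succ s =>
      rw [S.lastm_pos j0 p (by omega)]
      rw [show s + 1 + 1 - 1 = (s+1-1)+1 by omega, S.pget_cons]

end MJParams

end Help
section Delta

open Matrix

lemma MJParams.tower' (S : MJParams) (i : Fin S.L) {s : ℕ} {α : Type*} [AddCommMonoid α]
    [Module ℝ α] (f : (Fin (s+1) → Fin S.L) → α) (g : (j : Fin S.L) → (Fin s → Fin S.L) → α)
    (h : ∀ j p, f (Fin.cons j p) = g j p) :
    ∑ j, S.Pr i j • S.expect j s (g j) = S.expect i (s+1) f := by
  rw [S.tower]
  exact Finset.sum_congr rfl fun j _ => by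
    rw [S.expect_congr _ (fun p => (h j p).symm)]

lemma CDREX.delta_formula {S : MJParams} {N : ℤ} (c : CDREX S N) (hd2 : 2 ≤ S.d) :
    ∀ r : ℕ, 1 ≤ r → r ≤ S.d - 1 → ∀ (i : Fin S.L) (k : ℤ), 0 ≤ k → k + r ≤ N + 1 →
    (c.δ r i (k-1))ᵀ =
      S.expect i r (fun j =>
        S.ATp j 0 r * (c.P (S.pget j (r-1)) (k-1+r) - c.P0 (S.pget j (r-1)) (k-1+r)) * S.Bget j (r-1))
      - ∑ s ∈ Finset.range r,
          S.expect i s (fun j =>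
            S.ATp j 0 s * (c.T0 (S.lastm i j s) (k-1+s))ᵀ * (c.W (S.lastm i j s) (k-1+s))⁻¹ *
              c.T (r-s) (S.lastm i j s) (k-1+s)) := by
  intro r hr1
  induction r, hr1 using Nat.le_induction with
  | base =>
      intro hrd i k hk0 hkN
      have h1 := c.hδ1 (by omega) i k hk0 (by omega)
      rw [h1, Finset.sum_range_one]
      congr 1
      · rw [S.expect_one]
        apply Finset.sum_congr rfl
        intro j0 _
        congr 1
        have e2 : S.pget (fun _ => j0 : Fin 1 → Fin S.L) 0 = j0 := by
          rw [MJParams.pget, dif_pos (by omega : (0:ℕ) < 1)]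
        have e1 : S.ATp (fun _ => j0 : Fin 1 → Fin S.L) 0 1 = (S.A j0)ᵀ := by
          rw [S.ATp_succ_left, S.ATp_zero, mul_one]
          simp only [MJParams.Aget]
          rw [e2]
        have e3 : S.Bget (fun _ => j0 : Fin 1 → Fin S.L) 0 = S.B j0 := by
          rw [MJParams.Bget, e2]
        rw [e1, e2, e3]
        rw [show k - 1 + ((1:ℕ):ℤ) = k by push_cast; ring]
      · rw [S.expect_zero _ _ (fun t => t.elim0), S.lastm_zero, S.ATp_zero, Matrix.one_mul]
        norm_num
  | succ r hr ih =>
      intro hrd i k hk0 hkN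
      have h1 := c.hδr (r+1) (by omega) hrd i k hk0 (by omega)
      simp only [Nat.add_sub_cancel] at h1
      have hsub : ∀ j : Fin S.L, (c.δ r j k)ᵀ =
          S.expect j r (fun p =>
            S.ATp p 0 r * (c.P (S.pget p (r-1)) (k+r) - c.P0 (S.pget p (r-1)) (k+r)) * S.Bget p (r-1))
          - ∑ s ∈ Finset.range r,
              S.expect j s (fun p =>
                S.ATp p 0 s * (c.T0 (S.lastm j p s) (k+s))ᵀ * (c.W (S.lastm j p s) (k+s))⁻¹ *
                  c.T (r-s) (S.lastm j p s) (k+s)) := by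
        intro j
        have := ih (by omega) j (k+1) (by omega) (by omega)
        rw [show k + 1 - 1 = k by ring] at this
        exact this
      have hδsum : ∑ x, S.Pr i x • ((S.A x)ᵀ * (c.δ r x k)ᵀ) =
          S.expect i (r+1) (fun j =>
            S.ATp j 0 (r+1) * (c.P (S.pget j (r+1-1)) (k-1+(r+1:ℕ)) - c.P0 (S.pget j (r+1-1)) (k-1+(r+1:ℕ))) * S.Bget j (r+1-1))
          - ∑ s ∈ Finset.range r,
              S.expect i (s+1) (fun j =>
                S.ATp j 0 (s+1) * (c.T0 (S.lastm i j (s+1)) (k-1+(s+1:ℕ)))ᵀ * (c.W (S.lastm i j (s+1)) (k-1+(s+1:ℕ)))⁻¹ *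
                  c.T (r+1-(s+1)) (S.lastm i j (s+1)) (k-1+(s+1:ℕ))) := by
        simp only [hsub, Matrix.mul_sub, smul_sub, Finset.sum_sub_distrib]
        refine congrArg₂ (Sub.sub : Matrix (Fin S.n) (Fin S.m) ℝ → _ → _) ?_ ?_
        · simp only [S.mul_expect]
          apply S.tower'
          intro j p
          simp only [Nat.add_sub_cancel]
          rw [S.ATp_succ_left, S.Aget_cons_zero, S.ATp_cons_one,
            S.pget_cons' j p hr, S.Bget_cons' j p hr,
            show (k - 1 + ((r+1:ℕ):ℤ)) = k + r by push_cast; ring]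
          simp only [Matrix.mul_sub, Matrix.sub_mul, Matrix.mul_assoc]
        · simp only [Matrix.mul_sum, Finset.smul_sum]
          rw [Finset.sum_comm]
          apply Finset.sum_congr rfl
          intro s _
          simp only [S.mul_expect]
          apply S.tower'
          intro j p
          simp only [Nat.add_sub_cancel, Nat.succ_sub_succ]
          rw [S.ATp_succ_left, S.Aget_cons_zero, S.ATp_cons_one, ← S.lastm_cons i j p s,
            show (k - 1 + ((s+1:ℕ):ℤ)) = k + s by push_cast; ring]
          simp only [Matrix.mul_assoc]
      have h0 : S.expect i 0 (fun j =>
            S.ATp j 0 0 * (c.T0 (S.lastm i j 0) (k-1+(0:ℕ)))ᵀ * (c.W (S.lastm i j 0) (k-1+(0:ℕ)))⁻¹ *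
              c.T (r+1-0) (S.lastm i j 0) (k-1+(0:ℕ)))
          = (c.T0 i (k - 1))ᵀ * (c.W i (k - 1))⁻¹ * c.T (r+1) i (k - 1) := by
        rw [S.expect_zero _ _ (fun t => t.elim0), S.lastm_zero, S.ATp_zero, Matrix.one_mul]
        norm_num
      rw [h1, hδsum, Finset.sum_range_succ', h0, sub_sub]

end Delta
section Push

open Matrix

lemma sum_Icc_reindex {M : Type*} [AddCommMonoid M] (d : ℕ) (f : ℕ → M) :
    ∑ s ∈ Finset.Icc 1 (d-1), f s = ∑ s ∈ Finset.range (d-1), f (d-1-s) := by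
  apply Finset.sum_bij' (fun s _ => d-1-s) (fun s _ => d-1-s)
  · intro a ha; rw [Finset.mem_Icc] at ha; rw [Finset.mem_range]; omega
  · intro a ha; rw [Finset.mem_range] at ha; rw [Finset.mem_Icc]; omega
  · intro a ha; rw [Finset.mem_Icc] at ha; omega
  · intro a ha; rw [Finset.mem_range] at ha; omega
  · intro a ha; rw [Finset.mem_Icc] at ha
    exact congrArg f (by omega)

lemma MJParams.pget_cons_lastm (S : MJParams) (j0 : Fin S.L) {s' : ℕ} (p : Fin s' → Fin S.L)
    (s : ℕ) : S.pget (Fin.cons j0 p : Fin (s'+1) → Fin S.L) s = S.lastm j0 p s := by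
  cases s with
  | zero => rw [S.lastm_zero, MJParams.pget, dif_pos (Nat.succ_pos s')]; exact Fin.cons_zero _ _
  | succ s => rw [S.pget_cons, S.lastm_pos _ _ (by omega), Nat.add_sub_cancel]

lemma MJParams.ATp_split (S : MJParams) {s' : ℕ} (j : Fin s' → Fin S.L) {c : ℕ} (hc : 1 ≤ c) :
    S.ATp j 0 c = (S.A (S.pget j 0))ᵀ * S.ATp j 1 (c-1) := by
  obtain ⟨c', rfl⟩ : ∃ c', c = c'+1 := ⟨c-1, by omega⟩
  rw [S.ATp_succ_left, MJParams.Aget, Nat.add_sub_cancel, Nat.zero_add]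

/-- The key expansion: `∑_j λ_{ij} M_j δ_j^{d-1}(k)ᵀ` in canonical form. -/
lemma CDREX.push {S : MJParams} {N : ℤ} (c : CDREX S N) (hd2 : 2 ≤ S.d)
    {ι : Type*} [Fintype ι] (M : Fin S.L → Matrix ι (Fin S.n) ℝ) (i : Fin S.L) (k : ℤ)
    (hk0 : 0 ≤ k) (hkN : k + S.d ≤ N + 1) :
    ∑ j, S.Pr i j • (M j * (c.δ (S.d - 1) j k)ᵀ) =
      S.expect i (S.d - 1 + 1) (fun q =>
        M (S.pget q 0) * (S.ATp q 1 (S.d-1) *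
          ((c.P (S.pget q (S.d-1)) (k-1+S.d) - c.P0 (S.pget q (S.d-1)) (k-1+S.d)) *
            S.Bget q (S.d-1))))
      - ∑ s ∈ Finset.range (S.d-1),
          S.expect i (s+1) (fun q =>
            M (S.pget q 0) * (S.ATp q 1 s * ((c.T0 (S.pget q s) (k+s))ᵀ *
              ((c.W (S.pget q s) (k+s))⁻¹ * c.T (S.d-1-s) (S.pget q s) (k+s))))) := by
  have hδ : ∀ j : Fin S.L, (c.δ (S.d-1) j k)ᵀ =
      S.expect j (S.d-1) (fun p =>
        S.ATp p 0 (S.d-1) * (c.P (S.pget p (S.d-1-1)) (k+(S.d-1:ℕ)) - c.P0 (S.pget p (S.d-1-1)) (k+(S.d-1:ℕ))) * S.Bget p (S.d-1-1))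
      - ∑ s ∈ Finset.range (S.d-1),
          S.expect j s (fun p =>
            S.ATp p 0 s * (c.T0 (S.lastm j p s) (k+s))ᵀ * (c.W (S.lastm j p s) (k+s))⁻¹ *
              c.T (S.d-1-s) (S.lastm j p s) (k+s)) := by
    intro j
    have := c.delta_formula hd2 (S.d-1) (by omega) (le_refl _) j (k+1) (by omega) (by omega)
    rw [show k + 1 - 1 = k by ring] at this
    exact this
  simp only [hδ, Matrix.mul_sub, smul_sub, Finset.sum_sub_distrib]
  refine congrArg₂ (Sub.sub : Matrix ι (Fin S.m) ℝ → _ → _) ?_ ?_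
  · simp only [S.mul_expect]
    apply S.tower'
    intro j p
    rw [S.pget_cons_lastm j p 0, S.lastm_zero, S.ATp_cons_one,
      S.pget_cons' j p (by omega : 1 ≤ S.d - 1), S.Bget_cons' j p (by omega : 1 ≤ S.d - 1),
      show (k - 1 + (S.d:ℤ)) = k + ((S.d-1:ℕ):ℤ) by omega]
    simp only [Matrix.mul_sub, Matrix.sub_mul, Matrix.mul_assoc]
  · simp only [Matrix.mul_sum, Finset.smul_sum]
    rw [Finset.sum_comm]
    apply Finset.sum_congr rfl
    intro s _
    simp only [S.mul_expect]
    apply S.tower'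
    intro j p
    rw [S.pget_cons_lastm j p 0, S.lastm_zero, S.ATp_cons_one, S.pget_cons_lastm j p s]
    simp only [Matrix.mul_assoc]

/-- The transposed `T0` recursion in canonical form. -/
lemma CDREX.T0form {S : MJParams} {N : ℤ} (c : CDREX S N) (hd2 : 2 ≤ S.d) (hN : (S.d:ℤ) ≤ N)
    (i : Fin S.L) (k : ℤ) (hk0 : 0 ≤ k) (hkN : k ≤ N - S.d + 1) :
    (c.T0 i (k-1))ᵀ =
      S.expect i (S.d - 1 + 1) (fun q =>
        (S.A (S.pget q 0))ᵀ * (S.ATp q 1 (S.d-1) *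
          ((c.P (S.pget q (S.d-1)) (k-1+S.d) - c.P0 (S.pget q (S.d-1)) (k-1+S.d)) *
            S.Bget q (S.d-1))))
      - ∑ s ∈ Finset.range (S.d-1),
          S.expect i (s+1) (fun q =>
            (S.A (S.pget q 0))ᵀ * (S.ATp q 1 s * ((c.T0 (S.pget q s) (k+s))ᵀ *
              ((c.W (S.pget q s) (k+s))⁻¹ * c.T (S.d-1-s) (S.pget q s) (k+s))))) := by
  have hrec := c.hT0 i (k + S.d - 1) (by omega) (by omega)
  rw [show k + (S.d:ℤ) - 1 - S.d = k - 1 by ring,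
    show k + (S.d:ℤ) - 1 = k - 1 + S.d by ring] at hrec
  rw [hrec, Matrix.transpose_sub, show S.d - 1 + 1 = S.d from by omega]
  refine congrArg₂ (Sub.sub : Matrix (Fin S.n) (Fin S.m) ℝ → _ → _) ?_ ?_
  · rw [S.expect_transpose]
    apply S.expect_congr
    intro j
    have hsym : (c.P (S.pget j (S.d-1)) (k-1+S.d) - c.P0 (S.pget j (S.d-1)) (k-1+S.d))ᵀ
        = c.P (S.pget j (S.d-1)) (k-1+S.d) - c.P0 (S.pget j (S.d-1)) (k-1+S.d) := by
      rw [Matrix.transpose_sub, c.symP hd2 hN _ _ (by omega) (by omega),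
        c.symP0 hd2 hN _ _ (by omega) (by omega)]
    rw [Matrix.transpose_mul, Matrix.transpose_mul, Matrix.transpose_transpose,
      S.transpose_Aprod, hsym, S.ATp_split j (by omega : 1 ≤ S.d)]
    simp only [Matrix.mul_assoc]
  · rw [Matrix.transpose_sum, sum_Icc_reindex]
    apply Finset.sum_congr rfl
    intro s hs
    rw [Finset.mem_range] at hs
    rw [show S.d - (S.d - 1 - s) = s + 1 by omega,
      show (k - 1 + (S.d:ℤ)) - ((S.d-1-s:ℕ):ℤ) = k + s by omega,
      Nat.add_sub_cancel]
    rw [S.expect_transpose]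
    apply S.expect_congr
    intro j
    rw [Matrix.transpose_mul, Matrix.transpose_mul, Matrix.transpose_mul,
      Matrix.transpose_transpose, S.transpose_Aprod, Matrix.transpose_nonsing_inv,
      S.ATp_split j (by omega : 1 ≤ s + 1), Nat.add_sub_cancel]
    by_cases hc : k + (s:ℤ) ≤ N - S.d
    · rw [c.symW hd2 hN _ _ (by omega) hc]
      simp only [Matrix.mul_assoc]
    · have h0 : c.T0 (S.pget j s) (k + s) = 0 := by
        rw [show k + (s:ℤ) = N - (N - (k + s)) by ring]
        exact c.hT0term _ _ (by omega) (by omega)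
      rw [h0]
      simp

/-- The transposed `T^1` recursion in canonical form. -/
lemma CDREX.T1form {S : MJParams} {N : ℤ} (c : CDREX S N) (hd2 : 2 ≤ S.d) (hN : (S.d:ℤ) ≤ N)
    (i : Fin S.L) (k : ℤ) (hk0 : 0 ≤ k) (hkN : k ≤ N - S.d + 1) :
    (c.T 1 i (k-1))ᵀ =
      S.expect i (S.d - 1 + 1) (fun q =>
        (S.B (S.pget q 0))ᵀ * (S.ATp q 1 (S.d-1) *
          ((c.P (S.pget q (S.d-1)) (k-1+S.d) - c.P0 (S.pget q (S.d-1)) (k-1+S.d)) *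
            S.Bget q (S.d-1))))
      - ∑ s ∈ Finset.range (S.d-1),
          S.expect i (s+1) (fun q =>
            (S.B (S.pget q 0))ᵀ * (S.ATp q 1 s * ((c.T0 (S.pget q s) (k+s))ᵀ *
              ((c.W (S.pget q s) (k+s))⁻¹ * c.T (S.d-1-s) (S.pget q s) (k+s))))) := by
  have hrec := c.hT 1 (le_refl 1) (by omega) i (k + S.d - 1) (by omega) (by omega)
  rw [show k + (S.d:ℤ) - 1 - S.d = k - 1 by ring,
    show k + (S.d:ℤ) - 1 = k - 1 + S.d by ring] at hrec
  rw [Finset.Icc_eq_empty (by omega : ¬ S.d - 1 + 1 ≤ S.d - 1), Finset.sum_empty, sub_zero] at hrec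
  rw [hrec, Matrix.transpose_sub, show S.d - 1 + 1 = S.d from by omega]
  refine congrArg₂ (Sub.sub : Matrix (Fin S.m) (Fin S.m) ℝ → _ → _) ?_ ?_
  · rw [S.expect_transpose]
    apply S.expect_congr
    intro j
    have hsym : (c.P (S.pget j (S.d-1)) (k-1+S.d) - c.P0 (S.pget j (S.d-1)) (k-1+S.d))ᵀ
        = c.P (S.pget j (S.d-1)) (k-1+S.d) - c.P0 (S.pget j (S.d-1)) (k-1+S.d) := by
      rw [Matrix.transpose_sub, c.symP hd2 hN _ _ (by omega) (by omega),
        c.symP0 hd2 hN _ _ (by omega) (by omega)]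
    rw [Matrix.transpose_mul, Matrix.transpose_mul, Matrix.transpose_mul,
      Matrix.transpose_transpose, S.transpose_Aprod, hsym]
    rw [show (1:ℕ) - 1 = 0 from rfl, MJParams.Bget]
    simp only [Matrix.mul_assoc]
  · rw [Matrix.transpose_sum, sum_Icc_reindex]
    apply Finset.sum_congr rfl
    intro s hs
    rw [Finset.mem_range] at hs
    rw [show S.d - (S.d - 1 - s) = s + 1 by omega,
      show (k - 1 + (S.d:ℤ)) - ((S.d-1-s:ℕ):ℤ) = k + s by omega,
      Nat.add_sub_cancel]
    rw [S.expect_transpose]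
    apply S.expect_congr
    intro j
    rw [show (1:ℕ) - 1 = 0 from rfl, MJParams.Bget]
    rw [Matrix.transpose_mul, Matrix.transpose_mul, Matrix.transpose_mul, Matrix.transpose_mul,
      Matrix.transpose_transpose, S.transpose_Aprod, Matrix.transpose_nonsing_inv]
    by_cases hc : k + (s:ℤ) ≤ N - S.d
    · rw [c.symW hd2 hN _ _ (by omega) hc]
      simp only [Matrix.mul_assoc]
    · have h0 : c.T0 (S.pget j s) (k + s) = 0 := by
        rw [show k + (s:ℤ) = N - (N - (k + s)) by ring]
        exact c.hT0term _ _ (by omega) (by omega)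
      rw [h0]
      simp

end Push
theorem stmt13 (S : MJParams) (hd2 : 2 ≤ S.d) (hR : S.R.PosDef) (hQ : S.Q.PosSemidef)
    (N : ℤ) (hN : (S.d : ℤ) ≤ N) (c : CDREX S N) (i : Fin S.L)
    (k : ℤ) (hk0 : 0 ≤ k) (hkN : k ≤ N - S.d + 1) :
    (∑ j, S.Pr i j • ((S.A j)ᵀ * (c.α 1 (fun _ => j) k)ᵀ)) = (c.T0 i (k - 1))ᵀ ∧
    (∑ j, S.Pr i j • ((S.B j)ᵀ * (c.α 1 (fun _ => j) k)ᵀ)) = (c.T 1 i (k - 1))ᵀ := by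
  have hα : ∀ j : Fin S.L, c.α 1 (fun _ => j) k = c.δ (S.d - 1) j k := fun j =>
    c.hα1 (by omega) (fun _ => j) k
  constructor
  · have h1 := c.push hd2 (fun j => (S.A j)ᵀ) i k hk0 (by omega)
    have h2 := c.T0form hd2 hN i k hk0 hkN
    simp only [hα]
    rw [h1]
    exact h2.symm
  · have h1 := c.push hd2 (fun j => (S.B j)ᵀ) i k hk0 (by omega)
    have h2 := c.T1form hd2 hN i k hk0 hkN
    simp only [hα]
    rw [h1]
    exact h2.symm
end

section
/- Assume d ≥ 3, R is positive definite and Q is positive semidefinite, and let N ≥ d. Then for every r with 2 ≤ r ≤ d−1, all modes i_1, i_2, …, i_{r−1} ∈ {1,…,L}, every mode i ∈ {1,…,L}, and every integer k with 0 ≤ k ≤ N−d+1, the CDRE and α quantities satisfy: (1) Σ_{j=1}^{L} λ_{i_1 j} A_j′ α^{d−r}_{(j, i_1, i_2, …, i_{r−1})}(k, N)′ = α^{d−r+1}_{(i_1, i_2, …, i_{r−1})}(k−1, N)′; and (2) E_i^{(r)}[ B_{j_r}′ α^{d−r}_{(j_r, j_{r−1}, …, j_1)}(k, N)′ ] = T_i^r(k−r,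 N)′, where the expectation is over mode paths (j_1,…,j_r) starting from i. -/
open MeasureTheory Filter Matrix Topology
open scoped ENNReal

noncomputable section

namespace MJLSAux

open MJParams Matrix

variable {S : MJParams}

/-- last mode of a path, or `i` if the path is empty -/
def plast (S : MJParams) (i : Fin S.L) {s : ℕ} (q : Fin s → Fin S.L) : Fin S.L :=
  if h : 0 < s then q ⟨s - 1, by omega⟩ else i

/-- concatenation of paths -/
def join {a b r : ℕ} (h : a + b = r) (p : Fin a → Fin S.L) (q : Fin b → Fin S.L) :
    Fin r → Fin S.L :=
  fun t => if ht : (t : ℕ) < a then p ⟨t, ht⟩ else q ⟨(t : ℕ) - a, by omega⟩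

lemma fin_congr {n : ℕ} {α : Sort*} {f : Fin n → α} {u v : ℕ} (hu : u < n) (hv : v < n)
    (h : u = v) : f ⟨u, hu⟩ = f ⟨v, hv⟩ := by subst h; rfl

lemma pget_lt {s : ℕ} (j : Fin s → Fin S.L) {t : ℕ} (h : t < s) :
    S.pget j t = j ⟨t, h⟩ := dif_pos h

lemma pget_join_lt {a b r : ℕ} (h : a + b = r) (p : Fin a → Fin S.L)
    (q : Fin b → Fin S.L) {t : ℕ} (ht : t < a) :
    S.pget (join h p q) t = S.pget p t := by
  rw [pget_lt _ (by omega : t < r), pget_lt _ ht]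
  simp [join, ht]

lemma pget_join_ge {a b r : ℕ} (h : a + b = r) (p : Fin a → Fin S.L)
    (q : Fin b → Fin S.L) (u : ℕ) :
    S.pget (join h p q) (a + u) = S.pget q u := by
  by_cases hu : u < b
  · rw [pget_lt _ (by omega : a + u < r), pget_lt _ hu]
    simp only [join]
    rw [dif_neg (by omega)]
    exact fin_congr _ _ (by omega)
  · unfold pget
    rw [dif_neg (by omega), dif_neg (by omega)]

lemma plast_eq_pget {s : ℕ} (i : Fin S.L) (q : Fin s → Fin S.L) (hs : 0 < s) :
    plast S i q = S.pget q (s - 1) := by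
  rw [plast, dif_pos hs, pget_lt _ (by omega)]

lemma plast_join {a b r : ℕ} (h : a + b = r) (i : Fin S.L) (p : Fin a → Fin S.L)
    (q : Fin b → Fin S.L) :
    plast S (plast S i p) q = plast S i (join h p q) := by
  subst h
  rcases Nat.eq_zero_or_pos b with hb | hb
  · subst hb
    unfold plast
    rw [dif_neg (by omega)]
    rcases Nat.eq_zero_or_pos a with ha | ha
    · subst ha
      rw [dif_neg (by omega), dif_neg (by omega)]
    · rw [dif_pos ha, dif_pos (by omega)]
      simp only [join]
      rw [dif_pos (by omega : a + 0 - 1 < a)]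
      exact fin_congr _ _ (by omega)
  · rw [plast_eq_pget _ _ hb, plast_eq_pget _ _ (by omega : 0 < a + b),
      show a + b - 1 = a + (b - 1) by omega, pget_join_ge]

/-- `pw` as a product over `Finset.range`. -/
lemma pw_eq_prod_range {s : ℕ} (i : Fin S.L) (j : Fin s → Fin S.L) :
    S.pw i j = ∏ t ∈ Finset.range s,
      S.Pr (if t = 0 then i else S.pget j (t - 1)) (S.pget j t) := by
  unfold pw
  rw [← Fin.prod_univ_eq_prod_range
    (fun t => S.Pr (if t = 0 then i else S.pget j (t - 1)) (S.pget j t)) s]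
  apply Finset.prod_congr rfl
  intro t _
  by_cases h : (t : ℕ) = 0
  · rw [dif_pos h, if_pos h, pget_lt _ t.isLt]
  · rw [dif_neg h, if_neg h, pget_lt _ t.isLt, pget_lt _ (by omega : (t:ℕ) - 1 < s)]

lemma pw_join {a b r : ℕ} (h : a + b = r) (i : Fin S.L) (p : Fin a → Fin S.L)
    (q : Fin b → Fin S.L) :
    S.pw i (join h p q) = S.pw i p * S.pw (plast S i p) q := by
  subst h
  rw [pw_eq_prod_range, pw_eq_prod_range, pw_eq_prod_range, Finset.prod_range_add]
  congr 1
  · apply Finset.prod_congr rfl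
    intro t ht
    rw [Finset.mem_range] at ht
    rw [pget_join_lt _ _ _ ht]
    by_cases h0 : t = 0
    · simp [h0]
    · rw [if_neg h0, if_neg h0, pget_join_lt _ _ _ (by omega)]
  · apply Finset.prod_congr rfl
    intro t ht
    rw [Finset.mem_range] at ht
    rw [pget_join_ge]
    congr 1
    by_cases h0 : t = 0
    · subst h0
      by_cases ha : a = 0
      · subst ha
        simp [plast]
      · rw [if_pos rfl, if_neg (by omega), show a + 0 - 1 = a - 1 by omega,
          pget_join_lt _ _ _ (by omega : a - 1 < a), plast_eq_pget _ _ (by omega)]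
    · rw [if_neg h0, if_neg (by omega), show a + t - 1 = a + (t - 1) by omega,
        pget_join_ge]

/-- the equivalence between pairs of paths and concatenated paths -/
def joinEquiv (S : MJParams) (a b : ℕ) :
    ((Fin a → Fin S.L) × (Fin b → Fin S.L)) ≃ (Fin (a + b) → Fin S.L) where
  toFun pq := join rfl pq.1 pq.2
  invFun w := (fun t => w ⟨t, by omega⟩, fun t => w ⟨a + t, by omega⟩)
  left_inv := by
    rintro ⟨p, q⟩
    simp only [join, Prod.mk.injEq]
    refine ⟨funext fun t => ?_, funext fun t => ?_⟩
    · rw [dif_pos t.isLt]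
    · rw [dif_neg (by omega)]
      exact fin_congr _ t.isLt (by omega)
  right_inv := by
    intro w
    funext t
    simp only [join]
    by_cases ht : (t : ℕ) < a
    · rw [dif_pos ht]
    · rw [dif_neg ht]
      exact fin_congr _ t.isLt (by omega)

lemma expect_join {α : Type*} [AddCommMonoid α] [Module ℝ α] {a b r : ℕ} (h : a + b = r)
    (i : Fin S.L) (f : (Fin r → Fin S.L) → α) :
    S.expect i r f
      = S.expect i a (fun p => S.expect (plast S i p) b (fun q => f (join h p q))) := by
  subst h
  unfold MJParams.expect
  rw [← Equiv.sum_comp (joinEquiv S a b) (fun w => S.pw i w • f w), Fintype.sum_prod_type]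
  apply Finset.sum_congr rfl
  intro p _
  rw [Finset.smul_sum]
  apply Finset.sum_congr rfl
  intro q _
  rw [smul_smul, ← pw_join rfl]
  rfl


section Linearity

variable {α : Type*} [AddCommGroup α] [Module ℝ α]

lemma expect_congr {s : ℕ} (i : Fin S.L) {f g : (Fin s → Fin S.L) → α}
    (h : ∀ q, f q = g q) : S.expect i s f = S.expect i s g := by
  unfold MJParams.expect
  exact Finset.sum_congr rfl fun q _ => by rw [h q]

lemma expect_sub {s : ℕ} (i : Fin S.L) (f g : (Fin s → Fin S.L) → α) :
    S.expect i s (fun q => f q - g q) = S.expect i s f - S.expect i s g := by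
  unfold MJParams.expect
  rw [← Finset.sum_sub_distrib]
  exact Finset.sum_congr rfl fun q _ => smul_sub _ _ _

lemma expect_finsum {s : ℕ} (i : Fin S.L) {ι : Type*} (F : Finset ι)
    (f : ι → (Fin s → Fin S.L) → α) :
    S.expect i s (fun q => ∑ t ∈ F, f t q) = ∑ t ∈ F, S.expect i s (f t) := by
  unfold MJParams.expect
  rw [Finset.sum_comm]
  exact Finset.sum_congr rfl fun q _ => Finset.smul_sum

lemma expect_zero_fn {s : ℕ} (i : Fin S.L) :
    S.expect i s (fun _ => (0 : α)) = 0 := by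
  unfold MJParams.expect
  simp

end Linearity

lemma mul_expect {s : ℕ} (i : Fin S.L) {n1 n2 n3 : Type*} [Fintype n1] [Fintype n2] [Fintype n3]
    (X : Matrix n1 n2 ℝ) (f : (Fin s → Fin S.L) → Matrix n2 n3 ℝ) :
    X * S.expect i s f = S.expect i s (fun q => X * f q) := by
  unfold MJParams.expect
  rw [Matrix.mul_sum]
  exact Finset.sum_congr rfl fun q _ => (Matrix.mul_smul _ _ _)

lemma expect_mul {s : ℕ} (i : Fin S.L) {n1 n2 n3 : Type*} [Fintype n1] [Fintype n2] [Fintype n3]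
    (X : Matrix n2 n3 ℝ) (f : (Fin s → Fin S.L) → Matrix n1 n2 ℝ) :
    S.expect i s f * X = S.expect i s (fun q => f q * X) := by
  unfold MJParams.expect
  rw [Matrix.sum_mul]
  exact Finset.sum_congr rfl fun q _ => (Matrix.smul_mul _ _ _)

lemma transpose_expect {s : ℕ} (i : Fin S.L) {n1 n2 : Type*}
    (f : (Fin s → Fin S.L) → Matrix n1 n2 ℝ) :
    (S.expect i s f)ᵀ = S.expect i s (fun q => (f q)ᵀ) := by
  unfold MJParams.expect
  rw [Matrix.transpose_sum]
  exact Finset.sum_congr rfl fun q _ => (Matrix.transpose_smul _ _)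

lemma expect_zero {α : Type*} [AddCommMonoid α] [Module ℝ α] (i : Fin S.L)
    (f : (Fin 0 → Fin S.L) → α) (q₀ : Fin 0 → Fin S.L) :
    S.expect i 0 f = f q₀ := by
  unfold MJParams.expect
  rw [Fintype.sum_unique]
  have h1 : S.pw i (default : Fin 0 → Fin S.L) = 1 := Finset.prod_of_isEmpty _
  rw [Subsingleton.elim (default : Fin 0 → Fin S.L) q₀] at h1 ⊢
  rw [h1, one_smul]

lemma pw_cons {s : ℕ} (i j : Fin S.L) (q : Fin s → Fin S.L) :
    S.pw i (Fin.cons j q) = S.Pr i j * S.pw j q := by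
  rw [pw_eq_prod_range, pw_eq_prod_range, Finset.prod_range_succ',
    mul_comm (S.Pr i j) _]
  congr 1
  · apply Finset.prod_congr rfl
    intro t _
    rw [if_neg (by omega)]
    congr 1
    · rcases Nat.eq_zero_or_pos t with h0 | h0
      · subst h0
        rw [if_pos rfl, show (0:ℕ) + 1 - 1 = 0 by omega, pget_lt _ (by omega : 0 < s + 1)]
        rfl
      · rw [if_neg (by omega)]
        by_cases ht : t - 1 < s
        · rw [pget_lt _ ht, pget_lt _ (by omega : t + 1 - 1 < s + 1)]
          have : (⟨t + 1 - 1, by omega⟩ : Fin (s+1)) = Fin.succ ⟨t - 1, ht⟩ := by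
            exact Fin.ext (by simp; omega)
          rw [this, Fin.cons_succ]
        · unfold MJParams.pget
          rw [dif_neg ht, dif_neg (by omega)]
    · by_cases ht : t < s
      · rw [pget_lt _ ht, pget_lt _ (by omega : t + 1 < s + 1)]
        have : (⟨t + 1, by omega⟩ : Fin (s+1)) = Fin.succ ⟨t, ht⟩ := rfl
        rw [this, Fin.cons_succ]
      · unfold MJParams.pget
        rw [dif_neg ht, dif_neg (by omega)]

lemma expect_cons {α : Type*} [AddCommMonoid α] [Module ℝ α] {s : ℕ} (i : Fin S.L)
    (f : (Fin (s+1) → Fin S.L) → α) :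
    S.expect i (s+1) f = ∑ j, S.Pr i j • S.expect j s (fun q => f (Fin.cons j q)) := by
  unfold MJParams.expect
  rw [← (Equiv.sum_comp (Fin.consEquiv (fun _ : Fin (s+1) => Fin S.L))
    (fun w => S.pw i w • f w)), Fintype.sum_prod_type]
  apply Finset.sum_congr rfl
  intro j _
  rw [Finset.smul_sum]
  apply Finset.sum_congr rfl
  intro q _
  show S.pw i (Fin.cons j q) • f (Fin.cons j q) = _
  rw [pw_cons, mul_smul]

/- pget/Aprod/Bget compatibility with cons and join -/

lemma pget_cons_zero {s : ℕ} (j : Fin S.L) (q : Fin s → Fin S.L) :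
    S.pget (Fin.cons j q) 0 = j := by
  rw [pget_lt _ (by omega : 0 < s + 1)]
  rfl

lemma pget_cons_succ {s : ℕ} (j : Fin S.L) (q : Fin s → Fin S.L) (u : ℕ) :
    S.pget (Fin.cons j q) (u + 1) = S.pget q u := by
  by_cases hu : u < s
  · rw [pget_lt _ hu, pget_lt _ (by omega : u + 1 < s + 1)]
    have : (⟨u + 1, by omega⟩ : Fin (s+1)) = Fin.succ ⟨u, hu⟩ := rfl
    rw [this, Fin.cons_succ]
  · unfold MJParams.pget
    rw [dif_neg hu, dif_neg (by omega)]

lemma pget_cons_pos {s u : ℕ} (j : Fin S.L) (q : Fin s → Fin S.L) (hu : 1 ≤ u) :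
    S.pget (Fin.cons j q) u = S.pget q (u - 1) := by
  rw [show u = (u - 1) + 1 by omega, pget_cons_succ, Nat.add_sub_cancel]

lemma Bget_cons_pos {s u : ℕ} (j : Fin S.L) (q : Fin s → Fin S.L) (hu : 1 ≤ u) :
    S.Bget (Fin.cons j q) u = S.Bget q (u - 1) := by
  unfold MJParams.Bget
  rw [pget_cons_pos _ _ hu]

lemma Aget_cons_succ {s : ℕ} (j : Fin S.L) (q : Fin s → Fin S.L) (u : ℕ) :
    S.Aget (Fin.cons j q) (u + 1) = S.Aget q u := by
  unfold MJParams.Aget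
  rw [pget_cons_succ]

lemma Bget_cons_succ {s : ℕ} (j : Fin S.L) (q : Fin s → Fin S.L) (u : ℕ) :
    S.Bget (Fin.cons j q) (u + 1) = S.Bget q u := by
  unfold MJParams.Bget
  rw [pget_cons_succ]

lemma Aprod_congr {s s' a a' c : ℕ} {w : Fin s → Fin S.L} {w' : Fin s' → Fin S.L}
    (h : ∀ t < c, S.Aget w (a + c - 1 - t) = S.Aget w' (a' + c - 1 - t)) :
    S.Aprod w a c = S.Aprod w' a' c := by
  unfold MJParams.Aprod
  congr 1
  apply List.map_congr_left
  intro t ht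
  exact h t (List.mem_range.mp ht)

lemma Aprod_succ {s a c : ℕ} (w : Fin s → Fin S.L) :
    S.Aprod w a (c + 1) = S.Aprod w (a + 1) c * S.Aget w a := by
  unfold MJParams.Aprod
  rw [List.range_succ, List.map_append, List.prod_append]
  congr 1
  · congr 1
    apply List.map_congr_left
    intro t ht
    have ht' := List.mem_range.mp ht
    rw [show a + (c + 1) - 1 - t = (a + 1) + c - 1 - t by omega]
  · simp only [List.map_cons, List.map_nil, List.prod_cons, List.prod_nil, mul_one]
    rw [show a + (c + 1) - 1 - c = a by omega]

lemma Aprod_cons_shift {s a c : ℕ} (j : Fin S.L) (q : Fin s → Fin S.L) :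
    S.Aprod (Fin.cons j q) (a + 1) c = S.Aprod q a c := by
  apply Aprod_congr
  intro t ht
  rw [show a + 1 + c - 1 - t = (a + c - 1 - t) + 1 by omega, Aget_cons_succ]

lemma Aprod_cons_zero {s c : ℕ} (j : Fin S.L) (q : Fin s → Fin S.L) :
    S.Aprod (Fin.cons j q) 0 (c + 1) = S.Aprod q 0 c * S.A j := by
  rw [Aprod_succ, Aprod_cons_shift]
  congr 1

lemma Aget_join {a b r : ℕ} (h : a + b = r) (p : Fin a → Fin S.L)
    (q : Fin b → Fin S.L) (u : ℕ) :
    S.Aget (join h p q) (a + u) = S.Aget q u := by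
  unfold MJParams.Aget
  rw [pget_join_ge]

lemma Bget_join {a b r : ℕ} (h : a + b = r) (p : Fin a → Fin S.L)
    (q : Fin b → Fin S.L) (u : ℕ) :
    S.Bget (join h p q) (a + u) = S.Bget q u := by
  unfold MJParams.Bget
  rw [pget_join_ge]

lemma Aprod_join {a b r e c : ℕ} (h : a + b = r) (p : Fin a → Fin S.L)
    (q : Fin b → Fin S.L) :
    S.Aprod (join h p q) (a + e) c = S.Aprod q e c := by
  apply Aprod_congr
  intro t ht
  rw [show a + e + c - 1 - t = a + (e + c - 1 - t) by omega, Aget_join]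

lemma Aprod_zero {s a : ℕ} (w : Fin s → Fin S.L) : S.Aprod w a 0 = 1 := rfl



lemma sandwich_trans {m1 m2 m3 : Type*} [Fintype m1] [DecidableEq m1]
    (X : Matrix m1 m2 ℝ) (Wi : Matrix m1 m1 ℝ) (Y : Matrix m1 m3 ℝ) (hW : Wiᵀ = Wi) :
    (Xᵀ * Wi⁻¹ * Y)ᵀ = Yᵀ * Wi⁻¹ * X := by
  rw [Matrix.transpose_mul, Matrix.transpose_mul, Matrix.transpose_transpose,
    Matrix.transpose_nonsing_inv, hW, ← Matrix.mul_assoc]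

section Main

variable {S : MJParams} {N : ℤ} (c : CDREX S N)

lemma T_term (r : ℕ) (hr1 : 1 ≤ r) (hr2 : r ≤ S.d - 1) (i : Fin S.L) (τ : ℤ)
    (h1 : N - S.d + 1 ≤ τ) (h2 : τ ≤ N) : c.T r i τ = 0 := by
  have h := c.hTterm r hr1 hr2 i (N - τ) (by omega) (by omega)
  rwa [show N - (N - τ) = τ by ring] at h

lemma T0_term (i : Fin S.L) (τ : ℤ) (h1 : N - S.d + 1 ≤ τ) (h2 : τ ≤ N) :
    c.T0 i τ = 0 := by
  have h := c.hT0term i (N - τ) (by omega) (by omega)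
  rwa [show N - (N - τ) = τ by ring] at h

lemma sym_main (hd1 : 1 ≤ S.d) (hN : (S.d : ℤ) ≤ N) : ∀ n : ℕ, ∀ u : ℤ, N - u = (n : ℤ) →
    (∀ i, 0 ≤ u → u ≤ N → (c.P i u)ᵀ = c.P i u ∧ (c.P0 i u)ᵀ = c.P0 i u) ∧
    (∀ i, -(S.d : ℤ) ≤ u → u ≤ N - S.d → (c.W i u)ᵀ = c.W i u) := by
  intro n
  induction n using Nat.strong_induction_on with
  | _ n IH =>
    intro u hu
    have getW : ∀ u' : ℤ, u < u' → -(S.d : ℤ) ≤ u' → u' ≤ N - S.d →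
        ∀ i, (c.W i u')ᵀ = c.W i u' := by
      intro u' h1 h2 h3 i
      exact (IH (N - u').toNat (by omega) u' (by omega)).2 i h2 h3
    have getP : ∀ u' : ℤ, u < u' → 0 ≤ u' → u' ≤ N →
        ∀ i, (c.P i u' - c.P0 i u')ᵀ = c.P i u' - c.P0 i u' := by
      intro u' h1 h2 h3 i
      have h := (IH (N - u').toNat (by omega) u' (by omega)).1 i h2 h3
      rw [Matrix.transpose_sub, h.1, h.2]
    have WS : ∀ i, -(S.d : ℤ) ≤ u → u ≤ N - S.d → (c.W i u)ᵀ = c.W i u := by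
      intro i h2 h3
      have hk := c.hW i (u + S.d) (by omega) (by omega)
      rw [show u + (S.d : ℤ) - S.d = u by ring] at hk
      rw [hk, Matrix.transpose_sub]
      congr 1
      · rw [transpose_expect]
        apply expect_congr
        intro q
        rw [Matrix.transpose_add, Matrix.transpose_mul, Matrix.transpose_mul,
          Matrix.transpose_transpose, getP (u + S.d) (by omega) (by omega) (by omega),
          S.hRsymm.eq, Matrix.mul_assoc]
      · rw [Matrix.transpose_sum]
        apply Finset.sum_congr rfl
        intro s hs
        rw [Finset.mem_Icc] at hs
        rw [transpose_expect]
        apply expect_congr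
        intro q
        by_cases hcase : u + (S.d : ℤ) - s ≤ N - S.d
        · exact sandwich_trans _ _ _
            (getW (u + S.d - s) (by omega) (by omega) hcase _)
        · rw [T_term c s hs.1 hs.2 _ (u + S.d - s) (by omega) (by omega)]
          simp
    refine ⟨?_, WS⟩
    intro i h0 h1
    by_cases huN : u = N
    · have hp0 := c.hP0term i 0 (le_refl 0) (by omega)
      rw [show N - (0:ℤ) = N by ring] at hp0
      rw [huN, c.hPterm i, hp0]
      simp
    · constructor
      · have hp := c.hP i (u + 1) (by omega) (by omega)
        rw [show u + 1 - 1 = u by ring] at hp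
        rw [hp, Matrix.transpose_sum]
        apply Finset.sum_congr rfl
        intro j _
        rw [Matrix.transpose_smul, Matrix.transpose_add, Matrix.transpose_mul,
          Matrix.transpose_mul, Matrix.transpose_transpose,
          getP (u + 1) (by omega) (by omega) (by omega), S.hQsymm.eq, Matrix.mul_assoc]
      · have hp0 := c.hP0 i (u + 1) (by omega) (by omega)
        rw [show u + 1 - 1 = u by ring] at hp0
        rw [hp0]
        by_cases hc : u ≤ N - S.d
        · exact sandwich_trans _ _ _ (WS i (by omega) hc)
        · rw [T0_term c i u (by omega) (by omega)]
          simp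

lemma W_symm (hd1 : 1 ≤ S.d) (hN : (S.d : ℤ) ≤ N) (i : Fin S.L) (u : ℤ)
    (h1 : -(S.d : ℤ) ≤ u) (h2 : u ≤ N - S.d) : (c.W i u)ᵀ = c.W i u :=
  (sym_main c hd1 hN (N - u).toNat u (by omega)).2 i h1 h2

lemma PmP0_symm (hd1 : 1 ≤ S.d) (hN : (S.d : ℤ) ≤ N) (i : Fin S.L) (u : ℤ)
    (h1 : 0 ≤ u) (h2 : u ≤ N) : (c.P i u - c.P0 i u)ᵀ = c.P i u - c.P0 i u := by
  have h := (sym_main c hd1 hN (N - u).toNat u (by omega)).1 i h1 h2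
  rw [Matrix.transpose_sub, h.1, h.2]

/-- transpose of `T sᵀ W⁻¹ T0` sandwich -/
lemma TWT0_trans (hd1 : 1 ≤ S.d) (hN : (S.d : ℤ) ≤ N) (s : ℕ) (hs1 : 1 ≤ s)
    (hs2 : s ≤ S.d - 1) (π : Fin S.L) (τ : ℤ) (hτ0 : -(S.d : ℤ) ≤ τ) (hτ1 : τ ≤ N - 1) :
    ((c.T s π τ)ᵀ * (c.W π τ)⁻¹ * c.T0 π τ)ᵀ = (c.T0 π τ)ᵀ * (c.W π τ)⁻¹ * c.T s π τ := by
  by_cases hcase : τ ≤ N - S.d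
  · exact sandwich_trans _ _ _ (W_symm c hd1 hN π τ hτ0 hcase)
  · rw [T_term c s hs1 hs2 π τ (by omega) (by omega),
      T0_term c π τ (by omega) (by omega)]
    simp

/-- transpose of `T sᵀ W⁻¹ T s'` sandwich -/
lemma TWT_trans (hd1 : 1 ≤ S.d) (hN : (S.d : ℤ) ≤ N) (s s' : ℕ) (hs1 : 1 ≤ s)
    (hs2 : s ≤ S.d - 1) (π : Fin S.L) (τ : ℤ) (hτ0 : -(S.d : ℤ) ≤ τ) (hτ1 : τ ≤ N - 1) :
    ((c.T s π τ)ᵀ * (c.W π τ)⁻¹ * c.T s' π τ)ᵀ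
      = (c.T s' π τ)ᵀ * (c.W π τ)⁻¹ * c.T s π τ := by
  by_cases hcase : τ ≤ N - S.d
  · exact sandwich_trans _ _ _ (W_symm c hd1 hN π τ hτ0 hcase)
  · rw [T_term c s hs1 hs2 π τ (by omega) (by omega)]
    simp

end Main


lemma plast_nil (i : Fin S.L) (q : Fin 0 → Fin S.L) : plast S i q = i :=
  dif_neg (by omega)

lemma plast_cons {s : ℕ} (i j : Fin S.L) (q : Fin s → Fin S.L) :
    plast S i (Fin.cons j q) = plast S j q := by
  rcases Nat.eq_zero_or_pos s with hs | hs
  · subst hs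
    rw [plast_eq_pget _ _ (by omega : 0 < 0 + 1), pget_cons_zero, plast_nil]
  · rw [plast_eq_pget _ _ (by omega : 0 < s + 1), plast_eq_pget _ _ hs,
      show s + 1 - 1 = (s - 1) + 1 by omega, pget_cons_succ]

lemma Aget_eq {s : ℕ} (q : Fin s → Fin S.L) (u : ℕ) : S.Aget q u = S.A (S.pget q u) := rfl

lemma Bget_eq {s : ℕ} (q : Fin s → Fin S.L) (u : ℕ) : S.Bget q u = S.B (S.pget q u) := rfl

lemma pget_const {s : ℕ} (j : Fin S.L) (u : ℕ) (h : u < s) :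
    S.pget (fun _ : Fin s => j) u = j := by rw [pget_lt _ h]

lemma Aprod_one {s a : ℕ} (w : Fin s → Fin S.L) : S.Aprod w a 1 = S.Aget w a := by
  rw [show (1:ℕ) = 0 + 1 from rfl, Aprod_succ, Aprod_zero, one_mul]

lemma expect_one {α : Type*} [AddCommMonoid α] [Module ℝ α] (i : Fin S.L)
    (f : (Fin 1 → Fin S.L) → α) :
    S.expect i 1 f = ∑ j, S.Pr i j • f (fun _ => j) := by
  show S.expect i (0 + 1) f = _
  rw [expect_cons]
  apply Finset.sum_congr rfl
  intro j _
  congr 1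
  rw [expect_zero _ _ (fun t => t.elim0)]
  congr 1
  funext t
  refine Fin.cases ?_ (fun t => t.elim0) t
  rfl

section Formula

variable {S : MJParams} {N : ℤ} (c : CDREX S N)

/-- Master unrolled formula for `δ^m`. -/
lemma delta_formula (hd3 : 3 ≤ S.d) (hN : (S.d : ℤ) ≤ N) :
    ∀ m : ℕ, 1 ≤ m → m ≤ S.d - 1 → ∀ i : Fin S.L, ∀ k : ℤ, 0 ≤ k → k + m - 1 ≤ N →
    (c.δ m i (k - 1))ᵀ =
      S.expect i m (fun q =>
        (S.Aprod q 0 m)ᵀ *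
          (c.P (S.pget q (m - 1)) (k - 1 + m) - c.P0 (S.pget q (m - 1)) (k - 1 + m))
          * S.Bget q (m - 1))
      - ∑ t ∈ Finset.range m,
          S.expect i t (fun q =>
            (S.Aprod q 0 t)ᵀ * (c.T0 (plast S i q) (k - 1 + t))ᵀ
              * (c.W (plast S i q) (k - 1 + t))⁻¹ * c.T (m - t) (plast S i q) (k - 1 + t)) := by
  intro m hm1
  induction m, hm1 using Nat.le_induction with
  | base =>
    intro _ i k hk0 hkN
    rw [c.hδ1 (by omega) i k hk0 (by omega), expect_one, Finset.sum_range_one,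
      expect_zero _ _ (fun t => t.elim0)]
    congr 1
    · apply Finset.sum_congr rfl
      intro j _
      congr 1
      rw [Aprod_one, Aget_eq, Bget_eq, pget_const (s := 1) j 0 (by omega),
        show k - 1 + ((1:ℕ):ℤ) = k by push_cast; ring]
    · rw [Aprod_zero, Matrix.transpose_one, plast_nil, Matrix.one_mul,
        show k - 1 + ((0:ℕ):ℤ) = k - 1 by push_cast; ring]
  | succ m hm1 IH =>
    intro hm2 i k hk0 hkN
    have hδ := c.hδr (m + 1) (by omega) hm2 i k hk0 (by omega)
    simp only [Nat.add_sub_cancel] at hδ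
    rw [hδ]
    have IH' : ∀ j : Fin S.L, (c.δ m j k)ᵀ =
        S.expect j m (fun q =>
          (S.Aprod q 0 m)ᵀ *
            (c.P (S.pget q (m - 1)) (k + m) - c.P0 (S.pget q (m - 1)) (k + m))
            * S.Bget q (m - 1))
        - ∑ t ∈ Finset.range m,
            S.expect j t (fun q =>
              (S.Aprod q 0 t)ᵀ * (c.T0 (plast S j q) (k + t))ᵀ
                * (c.W (plast S j q) (k + t))⁻¹ * c.T (m - t) (plast S j q) (k + t)) := by
      intro j
      have h := IH (by omega) j (k + 1) (by omega) (by omega)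
      rw [show k + 1 - 1 = k by ring] at h
      exact h
    -- rewrite goal RHS
    rw [Finset.sum_range_succ']
    -- t = 0 term
    have h0 : S.expect i 0 (fun q =>
        (S.Aprod q 0 0)ᵀ * (c.T0 (plast S i q) (k - 1 + ((0:ℕ):ℤ)))ᵀ
          * (c.W (plast S i q) (k - 1 + ((0:ℕ):ℤ)))⁻¹
          * c.T (m + 1 - 0) (plast S i q) (k - 1 + ((0:ℕ):ℤ)))
        = (c.T0 i (k - 1))ᵀ * (c.W i (k - 1))⁻¹ * c.T (m + 1) i (k - 1) := by
      rw [expect_zero _ _ (fun t => t.elim0), Aprod_zero, Matrix.transpose_one, plast_nil,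
        Matrix.one_mul, Nat.sub_zero, show k - 1 + ((0:ℕ):ℤ) = k - 1 by push_cast; ring]
    rw [h0]
    -- lead term
    have hlead : S.expect i (m + 1) (fun q =>
        (S.Aprod q 0 (m + 1))ᵀ *
          (c.P (S.pget q (m + 1 - 1)) (k - 1 + ((m+1:ℕ):ℤ))
            - c.P0 (S.pget q (m + 1 - 1)) (k - 1 + ((m+1:ℕ):ℤ)))
          * S.Bget q (m + 1 - 1))
        = ∑ j, S.Pr i j • ((S.A j)ᵀ * S.expect j m (fun q =>
            (S.Aprod q 0 m)ᵀ *
              (c.P (S.pget q (m - 1)) (k + m) - c.P0 (S.pget q (m - 1)) (k + m))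
              * S.Bget q (m - 1))) := by
      rw [expect_cons]
      apply Finset.sum_congr rfl
      intro j _
      rw [mul_expect]
      congr 1
      apply expect_congr
      intro q
      rw [Aprod_cons_zero, Matrix.transpose_mul, Nat.add_sub_cancel,
        pget_cons_pos j q hm1, Bget_cons_pos j q hm1,
        show k - 1 + ((m + 1 : ℕ):ℤ) = k + (m : ℤ) by push_cast; ring]
      simp only [Matrix.mul_assoc]
    rw [hlead]
    -- t+1 terms
    have htt : ∀ t ∈ Finset.range m, S.expect i (t + 1) (fun q =>
        (S.Aprod q 0 (t + 1))ᵀ * (c.T0 (plast S i q) (k - 1 + ((t+1:ℕ):ℤ)))ᵀ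
          * (c.W (plast S i q) (k - 1 + ((t+1:ℕ):ℤ)))⁻¹
          * c.T (m + 1 - (t + 1)) (plast S i q) (k - 1 + ((t+1:ℕ):ℤ)))
        = ∑ j, S.Pr i j • ((S.A j)ᵀ * S.expect j t (fun q =>
            (S.Aprod q 0 t)ᵀ * (c.T0 (plast S j q) (k + t))ᵀ
              * (c.W (plast S j q) (k + t))⁻¹ * c.T (m - t) (plast S j q) (k + t))) := by
      intro t _
      rw [expect_cons]
      apply Finset.sum_congr rfl
      intro j _
      rw [mul_expect]
      congr 1
      apply expect_congr
      intro q
      rw [Aprod_cons_zero, Matrix.transpose_mul, plast_cons,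
        show k - 1 + ((t+1:ℕ):ℤ) = k + (t:ℤ) by push_cast; ring,
        show m + 1 - (t + 1) = m - t by omega]
      simp only [Matrix.mul_assoc]
    rw [Finset.sum_congr rfl htt]
    -- now pure algebra
    have key : ∀ j ∈ (Finset.univ : Finset (Fin S.L)),
        S.Pr i j • ((S.A j)ᵀ * (c.δ m j k)ᵀ)
          = S.Pr i j • ((S.A j)ᵀ * S.expect j m (fun q =>
              (S.Aprod q 0 m)ᵀ *
                (c.P (S.pget q (m - 1)) (k + m) - c.P0 (S.pget q (m - 1)) (k + m))
                * S.Bget q (m - 1)))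
            - ∑ t ∈ Finset.range m, S.Pr i j • ((S.A j)ᵀ * S.expect j t (fun q =>
                (S.Aprod q 0 t)ᵀ * (c.T0 (plast S j q) (k + t))ᵀ
                  * (c.W (plast S j q) (k + t))⁻¹ * c.T (m - t) (plast S j q) (k + t))) := by
      intro j _
      rw [IH' j, Matrix.mul_sub, smul_sub, Matrix.mul_sum, Finset.smul_sum]
    rw [Finset.sum_congr rfl key, Finset.sum_sub_distrib, Finset.sum_comm, sub_sub]

end Formula


section Key

variable {S : MJParams} {N : ℤ} (c : CDREX S N)

lemma Aprod_cons_one {s c' : ℕ} (j : Fin S.L) (q : Fin s → Fin S.L) :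
    S.Aprod (Fin.cons j q) 1 c' = S.Aprod q 0 c' := Aprod_cons_shift j q

lemma Aprod_zero_succ {s c' : ℕ} (w : Fin s → Fin S.L) :
    S.Aprod w 0 (c' + 1) = S.Aprod w 1 c' * S.Aget w 0 := Aprod_succ w

lemma plast_eq_pget_cons {t : ℕ} (j : Fin S.L) (q : Fin t → Fin S.L) :
    plast S j q = S.pget (Fin.cons j q) t := by
  rcases Nat.eq_zero_or_pos t with ht | ht
  · subst ht
    rw [plast_nil, pget_cons_zero]
  · rw [plast_eq_pget _ _ ht, pget_cons_pos _ _ ht]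

/-- Prepending a one-step expectation with prefix matrix `G` to the δ-formula. -/
lemma expect_prepend_delta {P' : Type*} [Fintype P'] (G : Fin S.L → Matrix P' (Fin S.n) ℝ)
    (hd3 : 3 ≤ S.d) (hN : (S.d : ℤ) ≤ N) (m : ℕ) (hm1 : 1 ≤ m) (hm2 : m ≤ S.d - 1)
    (i : Fin S.L) (k : ℤ) (hk0 : 0 ≤ k) (hkN : k + m ≤ N) :
    ∑ j, S.Pr i j • (G j * (c.δ m j k)ᵀ) =
      S.expect i (m + 1) (fun w =>
        G (S.pget w 0) * (S.Aprod w 1 m)ᵀ *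
          (c.P (S.pget w m) (k + m) - c.P0 (S.pget w m) (k + m)) * S.Bget w m)
      - ∑ t ∈ Finset.range m,
          S.expect i (t + 1) (fun w =>
            G (S.pget w 0) * (S.Aprod w 1 t)ᵀ * (c.T0 (S.pget w t) (k + t))ᵀ
              * (c.W (S.pget w t) (k + t))⁻¹ * c.T (m - t) (S.pget w t) (k + t)) := by
  have IH' : ∀ j : Fin S.L, (c.δ m j k)ᵀ =
      S.expect j m (fun q =>
        (S.Aprod q 0 m)ᵀ *
          (c.P (S.pget q (m - 1)) (k + m) - c.P0 (S.pget q (m - 1)) (k + m))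
          * S.Bget q (m - 1))
      - ∑ t ∈ Finset.range m,
          S.expect j t (fun q =>
            (S.Aprod q 0 t)ᵀ * (c.T0 (plast S j q) (k + t))ᵀ
              * (c.W (plast S j q) (k + t))⁻¹ * c.T (m - t) (plast S j q) (k + t)) := by
    intro j
    have h := delta_formula c hd3 hN m hm1 hm2 j (k + 1) (by omega) (by omega)
    rw [show k + 1 - 1 = k by ring] at h
    exact h
  have hlead : S.expect i (m + 1) (fun w =>
      G (S.pget w 0) * (S.Aprod w 1 m)ᵀ *
        (c.P (S.pget w m) (k + m) - c.P0 (S.pget w m) (k + m)) * S.Bget w m)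
      = ∑ j, S.Pr i j • (G j * S.expect j m (fun q =>
          (S.Aprod q 0 m)ᵀ *
            (c.P (S.pget q (m - 1)) (k + m) - c.P0 (S.pget q (m - 1)) (k + m))
            * S.Bget q (m - 1))) := by
    rw [expect_cons]
    apply Finset.sum_congr rfl
    intro j _
    rw [mul_expect]
    congr 1
    apply expect_congr
    intro q
    rw [pget_cons_zero, Aprod_cons_one, pget_cons_pos j q hm1, Bget_cons_pos j q hm1]
    simp only [Matrix.mul_assoc]
  have htt : ∀ t ∈ Finset.range m, S.expect i (t + 1) (fun w =>
      G (S.pget w 0) * (S.Aprod w 1 t)ᵀ * (c.T0 (S.pget w t) (k + t))ᵀ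
        * (c.W (S.pget w t) (k + t))⁻¹ * c.T (m - t) (S.pget w t) (k + t))
      = ∑ j, S.Pr i j • (G j * S.expect j t (fun q =>
          (S.Aprod q 0 t)ᵀ * (c.T0 (plast S j q) (k + t))ᵀ
            * (c.W (plast S j q) (k + t))⁻¹ * c.T (m - t) (plast S j q) (k + t))) := by
    intro t _
    rw [expect_cons]
    apply Finset.sum_congr rfl
    intro j _
    rw [mul_expect]
    congr 1
    apply expect_congr
    intro q
    rw [pget_cons_zero, Aprod_cons_one, plast_eq_pget_cons]
    simp only [Matrix.mul_assoc]
  rw [hlead, Finset.sum_congr rfl htt]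
  have key : ∀ j ∈ (Finset.univ : Finset (Fin S.L)),
      S.Pr i j • (G j * (c.δ m j k)ᵀ)
        = S.Pr i j • (G j * S.expect j m (fun q =>
            (S.Aprod q 0 m)ᵀ *
              (c.P (S.pget q (m - 1)) (k + m) - c.P0 (S.pget q (m - 1)) (k + m))
              * S.Bget q (m - 1)))
          - ∑ t ∈ Finset.range m, S.Pr i j • (G j * S.expect j t (fun q =>
              (S.Aprod q 0 t)ᵀ * (c.T0 (plast S j q) (k + t))ᵀ
                * (c.W (plast S j q) (k + t))⁻¹ * c.T (m - t) (plast S j q) (k + t))) := by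
    intro j _
    rw [IH' j, Matrix.mul_sub, smul_sub, Matrix.mul_sum, Finset.smul_sum]
  rw [Finset.sum_congr rfl key, Finset.sum_sub_distrib, Finset.sum_comm]

/-- Identity (I): `∑_j λ_{ij} A_jᵀ δ^{d-1}(j,k)ᵀ = T0_i(k-1)ᵀ`. -/
lemma keyT0 (hd3 : 3 ≤ S.d) (hN : (S.d : ℤ) ≤ N) (i : Fin S.L) (k : ℤ)
    (hk0 : 0 ≤ k) (hkN : k ≤ N - S.d + 1) :
    ∑ j, S.Pr i j • ((S.A j)ᵀ * (c.δ (S.d - 1) j k)ᵀ) = (c.T0 i (k - 1))ᵀ := by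
  obtain ⟨e, he⟩ : ∃ e, S.d = e + 1 := ⟨S.d - 1, by omega⟩
  have he2 : 2 ≤ e := by omega
  have hpre := expect_prepend_delta c (fun j => (S.A j)ᵀ) hd3 hN (S.d - 1) (by omega)
    (le_refl _) i k hk0 (by omega)
  rw [show S.d - 1 = e by omega] at hpre
  rw [show S.d - 1 = e by omega, hpre]
  have hT0' := c.hT0 i (k + S.d - 1) (by omega) (by omega)
  rw [show k + (S.d : ℤ) - 1 - S.d = k - 1 by ring] at hT0'
  rw [he] at hT0'
  simp only [Nat.add_sub_cancel] at hT0'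
  rw [hT0', Matrix.transpose_sub, transpose_expect, Matrix.transpose_sum]
  congr 1
  · apply expect_congr
    intro q
    rw [Matrix.transpose_mul, Matrix.transpose_mul, Matrix.transpose_transpose,
      PmP0_symm c (by omega) hN _ _ (by omega) (by omega),
      show k + ((e+1 : ℕ) : ℤ) - 1 = k + (e : ℤ) by push_cast; ring,
      Aprod_zero_succ, Matrix.transpose_mul, Aget_eq]
    simp only [Matrix.mul_assoc]
  · refine Finset.sum_nbij' (fun t => e - t) (fun x => e - x)
      (fun t ht => ?_) (fun x hx => ?_) (fun t ht => ?_) (fun x hx => ?_) (fun t ht => ?_)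
    · rw [Finset.mem_range] at ht; simp only [Finset.mem_Icc]; omega
    · rw [Finset.mem_Icc] at hx; simp only [Finset.mem_range]; omega
    · rw [Finset.mem_range] at ht; omega
    · rw [Finset.mem_Icc] at hx; omega
    · rw [Finset.mem_range] at ht
      rw [show e + 1 - (e - t) = t + 1 by omega, transpose_expect]
      apply expect_congr
      intro q
      rw [Nat.add_sub_cancel,
        show k + ((e+1:ℕ) : ℤ) - 1 - ((e - t : ℕ) : ℤ) = k + (t : ℤ) by omega,
        Matrix.transpose_mul,
        TWT0_trans c (by omega) hN (e - t) (by omega) (by omega) _ _ (by omega) (by omega),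
        Aprod_zero_succ, Matrix.transpose_mul, Aget_eq]
      simp only [Matrix.mul_assoc]

/-- Identity (II): `∑_j λ_{ij} B_jᵀ δ^{d-1}(j,k)ᵀ = T^1_i(k-1)ᵀ`. -/
lemma keyT1 (hd3 : 3 ≤ S.d) (hN : (S.d : ℤ) ≤ N) (i : Fin S.L) (k : ℤ)
    (hk0 : 0 ≤ k) (hkN : k ≤ N - S.d + 1) :
    ∑ j, S.Pr i j • ((S.B j)ᵀ * (c.δ (S.d - 1) j k)ᵀ) = (c.T 1 i (k - 1))ᵀ := by
  obtain ⟨e, he⟩ : ∃ e, S.d = e + 1 := ⟨S.d - 1, by omega⟩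
  have he2 : 2 ≤ e := by omega
  have hpre := expect_prepend_delta c (fun j => (S.B j)ᵀ) hd3 hN (S.d - 1) (by omega)
    (le_refl _) i k hk0 (by omega)
  rw [show S.d - 1 = e by omega] at hpre
  rw [show S.d - 1 = e by omega, hpre]
  have hT' := c.hT 1 (by omega) (by omega) i (k + S.d - 1) (by omega) (by omega)
  rw [show k + (S.d : ℤ) - 1 - S.d = k - 1 by ring] at hT'
  rw [he] at hT'
  simp only [Nat.add_sub_cancel, Nat.sub_self] at hT'
  rw [show Finset.Icc (e + 1) e = ∅ from Finset.Icc_eq_empty (by omega),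
    Finset.sum_empty, sub_zero] at hT'
  rw [hT', Matrix.transpose_sub, transpose_expect, Matrix.transpose_sum]
  congr 1
  · apply expect_congr
    intro q
    simp only [Matrix.transpose_mul, Matrix.transpose_transpose, Matrix.mul_assoc, Bget_eq]
    rw [PmP0_symm c (by omega) hN _ _ (by omega) (by omega),
      show k + ((e+1 : ℕ) : ℤ) - 1 = k + (e : ℤ) by push_cast; ring]
  · refine Finset.sum_nbij' (fun t => e - t) (fun x => e - x)
      (fun t ht => ?_) (fun x hx => ?_) (fun t ht => ?_) (fun x hx => ?_) (fun t ht => ?_)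
    · rw [Finset.mem_range] at ht; simp only [Finset.mem_Icc]; omega
    · rw [Finset.mem_Icc] at hx; simp only [Finset.mem_range]; omega
    · rw [Finset.mem_range] at ht; omega
    · rw [Finset.mem_Icc] at hx; omega
    · rw [Finset.mem_range] at ht
      rw [show e + 1 - (e - t) = t + 1 by omega, transpose_expect]
      apply expect_congr
      intro q
      rw [Nat.add_sub_cancel,
        show k + ((e+1:ℕ) : ℤ) - 1 - ((e - t : ℕ) : ℤ) = k + (t : ℤ) by omega,
        Matrix.transpose_mul,
        TWT0_trans c (by omega) hN (e - t) (by omega) (by omega) _ _ (by omega) (by omega),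
        Matrix.transpose_mul, Bget_eq]
      simp only [Matrix.mul_assoc]

lemma pget_fun0 {jj : ℕ} (pth : Fin jj → Fin S.L) (u : ℕ) (hu : 1 ≤ u) :
    S.pget (fun t : Fin u => S.pget pth (t : ℕ)) 0 = S.pget pth 0 := by
  rw [pget_lt _ (by omega : 0 < u)]

/-- Claim 1: `∑_j λ A_jᵀ α^{d-jj-1}((j,pth))ᵀ = α^{d-jj}(pth)(k-1)ᵀ`. -/
lemma claim1 (hd3 : 3 ≤ S.d) (hN : (S.d : ℤ) ≤ N) (k : ℤ) (hk0 : 0 ≤ k)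
    (hkN : k ≤ N - S.d + 1) :
    ∀ jj : ℕ, 1 ≤ jj → jj ≤ S.d - 2 → ∀ pth : Fin jj → Fin S.L,
      ∑ j, S.Pr (S.pget pth 0) j • ((S.A j)ᵀ * (c.α (jj + 1) (Fin.cons j pth) k)ᵀ)
        = (c.α jj pth (k - 1))ᵀ := by
  intro jj
  induction jj using Nat.strong_induction_on with
  | _ jj IH =>
    intro hjj1 hjj2 pth
    obtain ⟨g, rfl⟩ : ∃ g, jj = g + 1 := ⟨jj - 1, by omega⟩
    have hα : ∀ j : Fin S.L, (c.α (g + 1 + 1) (Fin.cons j pth) k)ᵀ =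
        (c.δ (S.d - (g + 1 + 1)) j k)ᵀ
        - ∑ s ∈ Finset.Icc 1 (g + 1),
            (c.α s (fun t : Fin s => S.pget (Fin.cons j pth) (t : ℕ)) k)ᵀ *
              (c.W (S.pget (Fin.cons j pth) s) (k - s))⁻¹ *
              c.T (S.d - (g + 1 + 1) + s) (S.pget (Fin.cons j pth) s) (k - s) := by
      intro j
      have h := c.hαj (g + 1 + 1) (by omega) (by omega) (Fin.cons j pth) (k + 1)
        (by omega) (by omega)
      rw [show k + 1 - 1 = k by ring] at h
      simp only [Nat.add_sub_cancel] at h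
      rw [pget_cons_zero] at h
      exact h
    have hpath : ∀ (j : Fin S.L) (u : ℕ),
        (fun t : Fin (u + 1) => S.pget (Fin.cons j pth) (t : ℕ))
          = Fin.cons j (fun t : Fin u => S.pget pth (t : ℕ)) := by
      intro j u
      funext t
      refine Fin.cases ?_ (fun v => ?_) t
      · simp [pget_cons_zero]
      · simp [pget_cons_succ, Fin.cons_succ]
    -- step 1 : distribute
    have step1 : ∀ j ∈ (Finset.univ : Finset (Fin S.L)),
        S.Pr (S.pget pth 0) j • ((S.A j)ᵀ * (c.α (g + 1 + 1) (Fin.cons j pth) k)ᵀ)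
          = S.Pr (S.pget pth 0) j • ((S.A j)ᵀ * (c.δ (S.d - (g + 1 + 1)) j k)ᵀ)
            - ∑ s ∈ Finset.Icc 1 (g + 1), S.Pr (S.pget pth 0) j •
                ((S.A j)ᵀ *
                  ((c.α s (fun t : Fin s => S.pget (Fin.cons j pth) (t : ℕ)) k)ᵀ *
                    (c.W (S.pget (Fin.cons j pth) s) (k - s))⁻¹ *
                    c.T (S.d - (g + 1 + 1) + s) (S.pget (Fin.cons j pth) s) (k - s))) := by
      intro j _
      rw [hα j, Matrix.mul_sub, smul_sub, Matrix.mul_sum, Finset.smul_sum]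
    rw [Finset.sum_congr rfl step1, Finset.sum_sub_distrib, Finset.sum_comm]
    -- inner sums
    have hinner : ∀ s ∈ Finset.Icc 1 (g + 1),
        (∑ j, S.Pr (S.pget pth 0) j • ((S.A j)ᵀ *
          ((c.α s (fun t : Fin s => S.pget (Fin.cons j pth) (t : ℕ)) k)ᵀ *
            (c.W (S.pget (Fin.cons j pth) s) (k - s))⁻¹ *
            c.T (S.d - (g + 1 + 1) + s) (S.pget (Fin.cons j pth) s) (k - s))))
        = (∑ j, S.Pr (S.pget pth 0) j • ((S.A j)ᵀ *
            (c.α s (fun t : Fin s => S.pget (Fin.cons j pth) (t : ℕ)) k)ᵀ)) *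
          (c.W (S.pget pth (s - 1)) (k - s))⁻¹ *
          c.T (S.d - (g + 1 + 1) + s) (S.pget pth (s - 1)) (k - s) := by
      intro s hs
      rw [Finset.mem_Icc] at hs
      have hpg : ∀ j : Fin S.L, S.pget (Fin.cons j pth) s = S.pget pth (s - 1) :=
        fun j => pget_cons_pos j pth hs.1
      rw [Matrix.sum_mul, Matrix.sum_mul]
      apply Finset.sum_congr rfl
      intro j _
      rw [hpg j, ← Matrix.mul_assoc ((S.A j)ᵀ), ← Matrix.mul_assoc ((S.A j)ᵀ),
        Matrix.smul_mul, Matrix.smul_mul]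
    rw [Finset.sum_congr rfl hinner]
    -- split bottom of Icc 1 (g+1)
    have hsplit : Finset.Icc 1 (g + 1) = insert 1 (Finset.Icc 2 (g + 1)) := by
      ext x
      simp only [Finset.mem_Icc, Finset.mem_insert]
      omega
    rw [hsplit, Finset.sum_insert (by simp only [Finset.mem_Icc]; omega)]
    -- the s = 1 term
    have hone : (∑ j, S.Pr (S.pget pth 0) j • ((S.A j)ᵀ *
          (c.α 1 (fun t : Fin 1 => S.pget (Fin.cons j pth) (t : ℕ)) k)ᵀ))
        = (c.T0 (S.pget pth 0) (k - 1))ᵀ := by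
      have hpath1 : ∀ j : Fin S.L, (fun t : Fin 1 => S.pget (Fin.cons j pth) (t : ℕ))
          = Fin.cons j (fun t : Fin 0 => S.pget pth (t : ℕ)) := fun j => hpath j 0
      rw [← keyT0 c hd3 hN (S.pget pth 0) k hk0 hkN]
      apply Finset.sum_congr rfl
      intro j _
      rw [hpath1 j, c.hα1 (by omega), Fin.cons_zero]
    -- the s ≥ 2 terms
    have htail : ∀ s ∈ Finset.Icc 2 (g + 1),
        (∑ j, S.Pr (S.pget pth 0) j • ((S.A j)ᵀ *
            (c.α s (fun t : Fin s => S.pget (Fin.cons j pth) (t : ℕ)) k)ᵀ)) *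
          (c.W (S.pget pth (s - 1)) (k - s))⁻¹ *
          c.T (S.d - (g + 1 + 1) + s) (S.pget pth (s - 1)) (k - s)
        = (c.α (s - 1) (fun t : Fin (s - 1) => S.pget pth (t : ℕ)) (k - 1))ᵀ *
            (c.W (S.pget pth (s - 1)) (k - s))⁻¹ *
            c.T (S.d - (g + 1 + 1) + s) (S.pget pth (s - 1)) (k - s) := by
      intro s hs
      rw [Finset.mem_Icc] at hs
      obtain ⟨u, rfl⟩ : ∃ u, s = u + 1 := ⟨s - 1, by omega⟩
      rw [Nat.add_sub_cancel]
      have hIH := IH u (by omega) (by omega) (by omega)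
        (fun t : Fin u => S.pget pth (t : ℕ))
      rw [pget_fun0 pth u (by omega)] at hIH
      have hfac : (∑ j, S.Pr (S.pget pth 0) j • ((S.A j)ᵀ *
          (c.α (u + 1) (fun t : Fin (u + 1) => S.pget (Fin.cons j pth) (t : ℕ)) k)ᵀ))
          = (c.α u (fun t : Fin u => S.pget pth (t : ℕ)) (k - 1))ᵀ := by
        rw [← hIH]
        apply Finset.sum_congr rfl
        intro j _
        rw [hpath j u]
      rw [hfac]
    rw [Finset.sum_congr rfl htail, hone]
    -- reindex tail sum
    have hreindex : ∑ s ∈ Finset.Icc 2 (g + 1),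
        (c.α (s - 1) (fun t : Fin (s - 1) => S.pget pth (t : ℕ)) (k - 1))ᵀ *
          (c.W (S.pget pth (s - 1)) (k - s))⁻¹ *
          c.T (S.d - (g + 1 + 1) + s) (S.pget pth (s - 1)) (k - s)
        = ∑ s ∈ Finset.Icc 1 g,
            (c.α s (fun t : Fin s => S.pget pth (t : ℕ)) (k - 1))ᵀ *
              (c.W (S.pget pth s) (k - 1 - s))⁻¹ *
              c.T (S.d - (g + 1) + s) (S.pget pth s) (k - 1 - s) := by
      refine Finset.sum_nbij' (fun s => s - 1) (fun u => u + 1)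
        (fun s hs => ?_) (fun u hu => ?_) (fun s hs => ?_) (fun u hu => ?_)
        (fun s hs => ?_)
      · rw [Finset.mem_Icc] at hs; simp only [Finset.mem_Icc]; omega
      · rw [Finset.mem_Icc] at hu; simp only [Finset.mem_Icc]; omega
      · rw [Finset.mem_Icc] at hs; omega
      · rw [Finset.mem_Icc] at hu; omega
      · rw [Finset.mem_Icc] at hs
        rw [show k - (s : ℤ) = k - 1 - ((s - 1 : ℕ) : ℤ) by omega,
          show S.d - (g + 1 + 1) + s = S.d - (g + 1) + (s - 1) by omega]
    rw [hreindex]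
    -- the δ recursion
    have hδ := c.hδr (S.d - (g + 1)) (by omega) (by omega) (S.pget pth 0) k hk0 (by omega)
    rw [show S.d - (g + 1) - 1 = S.d - (g + 1 + 1) by omega] at hδ
    have hS0 : ∑ j, S.Pr (S.pget pth 0) j • ((S.A j)ᵀ * (c.δ (S.d - (g + 1 + 1)) j k)ᵀ)
        = (c.δ (S.d - (g + 1)) (S.pget pth 0) (k - 1))ᵀ
          + (c.T0 (S.pget pth 0) (k - 1))ᵀ * (c.W (S.pget pth 0) (k - 1))⁻¹ *
            c.T (S.d - (g + 1)) (S.pget pth 0) (k - 1) := by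
      rw [hδ]
      abel
    rw [hS0, show k - ((1:ℕ):ℤ) = k - 1 by push_cast; ring,
      show S.d - (g + 1 + 1) + 1 = S.d - (g + 1) by omega, Nat.sub_self]
    -- conclude via hαj / hα1
    rcases Nat.eq_zero_or_pos g with hg | hg
    · subst hg
      simp only [zero_add]
      rw [Finset.Icc_eq_empty (by omega : ¬ (1:ℕ) ≤ 0), Finset.sum_empty,
        c.hα1 (by omega) pth (k - 1), pget_lt pth (by omega : 0 < 1)]
      simp only [Fin.mk_zero]
      abel
    · have hR := c.hαj (g + 1) (by omega) (by omega) pth k hk0 (by omega)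
      simp only [Nat.add_sub_cancel] at hR
      rw [hR]
      abel

lemma Bget_join_lt {a b r : ℕ} (h : a + b = r) (p : Fin a → Fin S.L)
    (q : Fin b → Fin S.L) {u : ℕ} (hu : u < a) :
    S.Bget (join h p q) u = S.Bget p u := by
  unfold MJParams.Bget
  rw [pget_join_lt _ _ _ hu]

lemma Aprod_join' {a b r c' : ℕ} (h : a + b = r) (p : Fin a → Fin S.L)
    (q : Fin b → Fin S.L) :
    S.Aprod (join h p q) a c' = S.Aprod q 0 c' := by
  have := Aprod_join (e := 0) (c := c') h p q
  rwa [Nat.add_zero] at this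

/-- Tower step for the `s`-terms of Claim 2. -/
lemma claim2_termu (ρ u : ℕ) (hu1 : 1 ≤ u) (hu2 : u ≤ ρ) (k : ℤ) (i : Fin S.L)
    (hIH : ∀ i' : Fin S.L, S.expect i' u (fun q =>
        (S.Bget q (u - 1))ᵀ *
          (c.α u (fun t : Fin u => S.pget q (u - 1 - (t : ℕ))) k)ᵀ) = (c.T u i' (k - u))ᵀ) :
    S.expect i (ρ + 1) (fun q => (S.Bget q ρ)ᵀ *
        ((c.α u (fun t : Fin u => S.pget q (ρ - (t : ℕ))) k)ᵀ *
          (c.W (S.pget q (ρ - u)) (k - u))⁻¹ *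
          c.T (S.d - (ρ + 1) + u) (S.pget q (ρ - u)) (k - u)))
      = S.expect i (ρ + 1 - u) (fun q₁ =>
          (c.T u (S.pget q₁ (ρ - u)) (k - u))ᵀ * (c.W (S.pget q₁ (ρ - u)) (k - u))⁻¹ *
            c.T (S.d - (ρ + 1) + u) (S.pget q₁ (ρ - u)) (k - u)) := by
  rw [expect_join (show (ρ + 1 - u) + u = ρ + 1 by omega) i]
  apply expect_congr
  intro q₁
  have hπ : plast S i q₁ = S.pget q₁ (ρ - u) := by
    rw [plast_eq_pget _ _ (by omega : 0 < ρ + 1 - u), show ρ + 1 - u - 1 = ρ - u by omega]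
  have hin : ∀ q₂ : Fin u → Fin S.L,
      (S.Bget (join (show (ρ + 1 - u) + u = ρ + 1 by omega) q₁ q₂) ρ)ᵀ *
        ((c.α u (fun t : Fin u =>
            S.pget (join (show (ρ + 1 - u) + u = ρ + 1 by omega) q₁ q₂) (ρ - (t : ℕ))) k)ᵀ *
          (c.W (S.pget (join (show (ρ + 1 - u) + u = ρ + 1 by omega) q₁ q₂) (ρ - u)) (k - u))⁻¹ *
          c.T (S.d - (ρ + 1) + u)
            (S.pget (join (show (ρ + 1 - u) + u = ρ + 1 by omega) q₁ q₂) (ρ - u)) (k - u))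
      = ((S.Bget q₂ (u - 1))ᵀ *
          (c.α u (fun t : Fin u => S.pget q₂ (u - 1 - (t : ℕ))) k)ᵀ) *
          (c.W (S.pget q₁ (ρ - u)) (k - u))⁻¹ *
          c.T (S.d - (ρ + 1) + u) (S.pget q₁ (ρ - u)) (k - u) := by
    intro q₂
    have h1 : S.Bget (join (show (ρ + 1 - u) + u = ρ + 1 by omega) q₁ q₂) ρ
        = S.Bget q₂ (u - 1) := by
      have := Bget_join (show (ρ + 1 - u) + u = ρ + 1 by omega) q₁ q₂ (u - 1)
      rwa [show (ρ + 1 - u) + (u - 1) = ρ by omega] at this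
    have h2 : (fun t : Fin u =>
        S.pget (join (show (ρ + 1 - u) + u = ρ + 1 by omega) q₁ q₂) (ρ - (t : ℕ)))
        = (fun t : Fin u => S.pget q₂ (u - 1 - (t : ℕ))) := by
      funext t
      have ht : (t : ℕ) < u := t.isLt
      have := pget_join_ge (show (ρ + 1 - u) + u = ρ + 1 by omega) q₁ q₂ (u - 1 - (t : ℕ))
      rwa [show (ρ + 1 - u) + (u - 1 - (t : ℕ)) = ρ - (t : ℕ) by omega] at this
    have h3 : S.pget (join (show (ρ + 1 - u) + u = ρ + 1 by omega) q₁ q₂) (ρ - u)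
        = S.pget q₁ (ρ - u) := pget_join_lt _ _ _ (by omega)
    rw [h1, h2, h3, ← Matrix.mul_assoc, ← Matrix.mul_assoc]
  rw [expect_congr _ hin]
  have : ∀ (X : Matrix (Fin S.m) (Fin S.m) ℝ) (Y : Matrix (Fin S.m) (Fin S.m) ℝ),
      S.expect (plast S i q₁) u (fun q₂ => ((S.Bget q₂ (u - 1))ᵀ *
        (c.α u (fun t : Fin u => S.pget q₂ (u - 1 - (t : ℕ))) k)ᵀ) * X * Y)
      = (c.T u (plast S i q₁) (k - u))ᵀ * X * Y := by
    intro X Y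
    rw [← expect_mul, ← expect_mul, hIH (plast S i q₁)]
  rw [this, hπ]

/-- Tower step for the leading term of Claim 2. -/
lemma claim2_term1 (hd3 : 3 ≤ S.d) (hN : (S.d : ℤ) ≤ N) (ρ : ℕ) (hρ1 : 1 ≤ ρ)
    (hρ2 : ρ + 1 ≤ S.d - 1) (k : ℤ) (hk0 : 0 ≤ k) (hkN : k ≤ N - S.d + 1) (i : Fin S.L) :
    S.expect i (ρ + 1) (fun q => (S.Bget q ρ)ᵀ * (c.δ (S.d - (ρ + 1)) (S.pget q ρ) k)ᵀ)
      = S.expect i S.d (fun w => (S.Bget w ρ)ᵀ *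
          ((S.Aprod w (ρ + 1) (S.d - (ρ + 1)))ᵀ *
            ((c.P (S.pget w (S.d - 1)) (k + (S.d - (ρ + 1) : ℕ))
              - c.P0 (S.pget w (S.d - 1)) (k + (S.d - (ρ + 1) : ℕ))) * S.Bget w (S.d - 1))))
        - ∑ t ∈ Finset.range (S.d - (ρ + 1)),
            S.expect i (ρ + 1 + t) (fun w => (S.Bget w ρ)ᵀ *
              ((S.Aprod w (ρ + 1) t)ᵀ * ((c.T0 (S.pget w (ρ + t)) (k + t))ᵀ *
                ((c.W (S.pget w (ρ + t)) (k + t))⁻¹ *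
                  c.T (S.d - (ρ + 1) - t) (S.pget w (ρ + t)) (k + t))))) := by
  have hm1 : 1 ≤ S.d - (ρ + 1) := by omega
  have hδf : ∀ π : Fin S.L, (c.δ (S.d - (ρ + 1)) π k)ᵀ =
      S.expect π (S.d - (ρ + 1)) (fun p =>
        (S.Aprod p 0 (S.d - (ρ + 1)))ᵀ *
          (c.P (S.pget p (S.d - (ρ + 1) - 1)) (k + (S.d - (ρ + 1) : ℕ))
            - c.P0 (S.pget p (S.d - (ρ + 1) - 1)) (k + (S.d - (ρ + 1) : ℕ)))
          * S.Bget p (S.d - (ρ + 1) - 1))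
      - ∑ t ∈ Finset.range (S.d - (ρ + 1)),
          S.expect π t (fun p =>
            (S.Aprod p 0 t)ᵀ * (c.T0 (plast S π p) (k + t))ᵀ
              * (c.W (plast S π p) (k + t))⁻¹
              * c.T (S.d - (ρ + 1) - t) (plast S π p) (k + t)) := by
    intro π
    have h := delta_formula c hd3 hN (S.d - (ρ + 1)) hm1 (by omega) π (k + 1)
      (by omega) (by omega)
    rw [show k + 1 - 1 = k by ring] at h
    exact h
  have hplast : ∀ q : Fin (ρ + 1) → Fin S.L, S.pget q ρ = plast S i q := by
    intro q
    rw [plast_eq_pget _ _ (by omega : 0 < ρ + 1), Nat.add_sub_cancel]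
  have hstep : ∀ q : Fin (ρ + 1) → Fin S.L,
      (S.Bget q ρ)ᵀ * (c.δ (S.d - (ρ + 1)) (S.pget q ρ) k)ᵀ
        = S.expect (plast S i q) (S.d - (ρ + 1)) (fun p => (S.Bget q ρ)ᵀ *
            ((S.Aprod p 0 (S.d - (ρ + 1)))ᵀ *
              ((c.P (S.pget p (S.d - (ρ + 1) - 1)) (k + (S.d - (ρ + 1) : ℕ))
                - c.P0 (S.pget p (S.d - (ρ + 1) - 1)) (k + (S.d - (ρ + 1) : ℕ)))
                * S.Bget p (S.d - (ρ + 1) - 1))))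
          - ∑ t ∈ Finset.range (S.d - (ρ + 1)),
              S.expect (plast S i q) t (fun p => (S.Bget q ρ)ᵀ *
                ((S.Aprod p 0 t)ᵀ * ((c.T0 (plast S (plast S i q) p) (k + t))ᵀ *
                  ((c.W (plast S (plast S i q) p) (k + t))⁻¹ *
                    c.T (S.d - (ρ + 1) - t) (plast S (plast S i q) p) (k + t))))) := by
    intro q
    rw [hplast q, hδf (plast S i q), Matrix.mul_sub, Matrix.mul_sum, mul_expect]
    congr 1
    · apply expect_congr
      intro p
      simp only [Matrix.mul_assoc]
    · apply Finset.sum_congr rfl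
      intro t _
      rw [mul_expect]
      apply expect_congr
      intro p
      simp only [Matrix.mul_assoc]
  rw [expect_congr i hstep, expect_sub, expect_finsum]
  congr 1
  · have hj : (ρ + 1) + (S.d - (ρ + 1)) = S.d := by omega
    rw [expect_join hj i]
    apply expect_congr
    intro q
    apply expect_congr
    intro p
    have h1 : S.Bget (join hj q p) ρ = S.Bget q ρ := Bget_join_lt _ _ _ (by omega)
    have h2 : S.Aprod (join hj q p) (ρ + 1) (S.d - (ρ + 1))
        = S.Aprod p 0 (S.d - (ρ + 1)) := Aprod_join' _ _ _
    have h3 : S.pget (join hj q p) (S.d - 1) = S.pget p (S.d - (ρ + 1) - 1) := by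
      have := pget_join_ge hj q p (S.d - (ρ + 1) - 1)
      rwa [show (ρ + 1) + (S.d - (ρ + 1) - 1) = S.d - 1 by omega] at this
    have h4 : S.Bget (join hj q p) (S.d - 1) = S.Bget p (S.d - (ρ + 1) - 1) := by
      have := Bget_join hj q p (S.d - (ρ + 1) - 1)
      rwa [show (ρ + 1) + (S.d - (ρ + 1) - 1) = S.d - 1 by omega] at this
    rw [h1, h2, h3, h4]
  · apply Finset.sum_congr rfl
    intro t ht
    rw [Finset.mem_range] at ht
    rw [expect_join (rfl : (ρ + 1) + t = ρ + 1 + t) i]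
    apply expect_congr
    intro q
    apply expect_congr
    intro p
    have h1 : S.Bget (join (rfl : (ρ + 1) + t = ρ + 1 + t) q p) ρ
        = S.Bget q ρ := Bget_join_lt _ _ _ (by omega)
    have h2 : S.Aprod (join (rfl : (ρ + 1) + t = ρ + 1 + t) q p) (ρ + 1) t
        = S.Aprod p 0 t := Aprod_join' _ _ _
    have h3 : plast S (plast S i q) p
        = S.pget (join (rfl : (ρ + 1) + t = ρ + 1 + t) q p) (ρ + t) := by
      rw [plast_join (rfl : (ρ + 1) + t = ρ + 1 + t) i q p,
        plast_eq_pget _ _ (by omega : 0 < ρ + 1 + t),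
        show ρ + 1 + t - 1 = ρ + t by omega]
    rw [h1, h2, h3]

/-- Claim 2: `E_i^{(r)}[B' α^{d-r}((j_r,…,j_1))'] = T^r_i(k-r)'`. -/
lemma claim2 (hd3 : 3 ≤ S.d) (hN : (S.d : ℤ) ≤ N) (k : ℤ) (hk0 : 0 ≤ k)
    (hkN : k ≤ N - S.d + 1) :
    ∀ r : ℕ, 1 ≤ r → r ≤ S.d - 1 → ∀ i : Fin S.L,
      S.expect i r (fun q => (S.Bget q (r - 1))ᵀ *
          (c.α r (fun t : Fin r => S.pget q (r - 1 - (t : ℕ))) k)ᵀ)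
        = (c.T r i (k - r))ᵀ := by
  intro r
  induction r using Nat.strong_induction_on with
  | _ r IH =>
    intro hr1 hr2 i
    rcases Nat.lt_or_ge r 2 with hr | hr
    · -- base case r = 1
      have hr1' : r = 1 := by omega
      subst hr1'
      rw [show k - ((1:ℕ):ℤ) = k - 1 by push_cast; ring,
        ← keyT1 c hd3 hN i k hk0 hkN, expect_one]
      apply Finset.sum_congr rfl
      intro j _
      rw [c.hα1 (by omega)]
      simp only [Fin.val_zero, Nat.sub_zero, Nat.sub_self]
      rw [Bget_eq, pget_const (s := 1) j 0 (by omega)]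
    · -- inductive step
      obtain ⟨ρ, rfl⟩ : ∃ ρ, r = ρ + 1 := ⟨r - 1, by omega⟩
      have hρ1 : 1 ≤ ρ := by omega
      rw [Nat.add_sub_cancel]
      have hα : ∀ q : Fin (ρ + 1) → Fin S.L,
          (c.α (ρ + 1) (fun t : Fin (ρ + 1) => S.pget q (ρ - (t : ℕ))) k)ᵀ
          = (c.δ (S.d - (ρ + 1)) (S.pget q ρ) k)ᵀ
            - ∑ u ∈ Finset.Icc 1 ρ,
                (c.α u (fun t : Fin u => S.pget q (ρ - (t : ℕ))) k)ᵀ *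
                  (c.W (S.pget q (ρ - u)) (k - u))⁻¹ *
                  c.T (S.d - (ρ + 1) + u) (S.pget q (ρ - u)) (k - u) := by
        intro q
        have hp : ∀ u : ℕ, u < ρ + 1 →
            S.pget (fun t : Fin (ρ + 1) => S.pget q (ρ - (t : ℕ))) u
              = S.pget q (ρ - u) := by
          intro u hu
          rw [pget_lt _ hu]
        have h := c.hαj (ρ + 1) (by omega) (by omega)
          (fun t : Fin (ρ + 1) => S.pget q (ρ - (t : ℕ))) (k + 1) (by omega) (by omega)
        rw [show k + 1 - 1 = k by ring] at h
        simp only [Nat.add_sub_cancel] at h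
        rw [hp 0 (by omega), Nat.sub_zero] at h
        have hs : ∀ u ∈ Finset.Icc 1 ρ,
            (c.α u (fun t : Fin u =>
                S.pget (fun t' : Fin (ρ + 1) => S.pget q (ρ - (t' : ℕ))) (t : ℕ)) k)ᵀ *
              (c.W (S.pget (fun t' : Fin (ρ + 1) => S.pget q (ρ - (t' : ℕ))) u) (k - u))⁻¹ *
              c.T (S.d - (ρ + 1) + u)
                (S.pget (fun t' : Fin (ρ + 1) => S.pget q (ρ - (t' : ℕ))) u) (k - u)
            = (c.α u (fun t : Fin u => S.pget q (ρ - (t : ℕ))) k)ᵀ *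
              (c.W (S.pget q (ρ - u)) (k - u))⁻¹ *
              c.T (S.d - (ρ + 1) + u) (S.pget q (ρ - u)) (k - u) := by
          intro u hu
          rw [Finset.mem_Icc] at hu
          have hpath : (fun t : Fin u =>
              S.pget (fun t' : Fin (ρ + 1) => S.pget q (ρ - (t' : ℕ))) (t : ℕ))
              = (fun t : Fin u => S.pget q (ρ - (t : ℕ))) := by
            funext t
            exact hp (t : ℕ) (by have := t.isLt; omega)
          rw [hpath, hp u (by omega)]
        rw [Finset.sum_congr rfl hs] at h
        exact h
      have hLHS : S.expect i (ρ + 1) (fun q => (S.Bget q ρ)ᵀ *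
            (c.α (ρ + 1) (fun t : Fin (ρ + 1) => S.pget q (ρ - (t : ℕ))) k)ᵀ)
          = S.expect i (ρ + 1) (fun q => (S.Bget q ρ)ᵀ *
              (c.δ (S.d - (ρ + 1)) (S.pget q ρ) k)ᵀ)
            - ∑ u ∈ Finset.Icc 1 ρ, S.expect i (ρ + 1) (fun q => (S.Bget q ρ)ᵀ *
                ((c.α u (fun t : Fin u => S.pget q (ρ - (t : ℕ))) k)ᵀ *
                  (c.W (S.pget q (ρ - u)) (k - u))⁻¹ *
                  c.T (S.d - (ρ + 1) + u) (S.pget q (ρ - u)) (k - u))) := by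
        rw [← expect_finsum, ← expect_sub]
        apply expect_congr
        intro q
        rw [hα q, Matrix.mul_sub, Matrix.mul_sum]
      rw [hLHS, claim2_term1 c hd3 hN ρ hρ1 (by omega) k hk0 hkN i]
      have hu' : ∀ u ∈ Finset.Icc 1 ρ, S.expect i (ρ + 1) (fun q => (S.Bget q ρ)ᵀ *
            ((c.α u (fun t : Fin u => S.pget q (ρ - (t : ℕ))) k)ᵀ *
              (c.W (S.pget q (ρ - u)) (k - u))⁻¹ *
              c.T (S.d - (ρ + 1) + u) (S.pget q (ρ - u)) (k - u)))
          = S.expect i (ρ + 1 - u) (fun q₁ =>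
              (c.T u (S.pget q₁ (ρ - u)) (k - u))ᵀ * (c.W (S.pget q₁ (ρ - u)) (k - u))⁻¹ *
                c.T (S.d - (ρ + 1) + u) (S.pget q₁ (ρ - u)) (k - u)) := by
        intro u hu
        rw [Finset.mem_Icc] at hu
        exact claim2_termu c ρ u hu.1 hu.2 k i
          (fun i' => IH u (by omega) (by omega) (by omega) i')
      rw [Finset.sum_congr rfl hu']
      have hT' := c.hT (ρ + 1) (by omega) (by omega) i (k + S.d - ((ρ + 1 : ℕ) : ℤ))
        (by omega) (by omega)
      rw [show k + (S.d : ℤ) - ((ρ + 1 : ℕ) : ℤ) - S.d = k - ((ρ + 1 : ℕ) : ℤ) by ring] at hT'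
      simp only [Nat.add_sub_cancel] at hT'
      rw [hT', Matrix.transpose_sub, Matrix.transpose_sub, transpose_expect,
        Matrix.transpose_sum, Matrix.transpose_sum]
      congr 1
      · congr 1
        · -- lead term
          apply expect_congr
          intro w
          simp only [Matrix.transpose_mul, Matrix.transpose_transpose, Matrix.mul_assoc]
          rw [PmP0_symm c (by omega) hN _ _ (by omega) (by omega),
            show k + (S.d : ℤ) - ((ρ + 1 : ℕ) : ℤ) = k + ((S.d - (ρ + 1) : ℕ) : ℤ) by omega]
        · -- first sum
          refine Finset.sum_nbij' (fun t => S.d - (ρ + 1) - t) (fun x => S.d - (ρ + 1) - x)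
            (fun t ht => ?_) (fun x hx => ?_) (fun t ht => ?_) (fun x hx => ?_)
            (fun t ht => ?_)
          · rw [Finset.mem_range] at ht; simp only [Finset.mem_Icc]; omega
          · rw [Finset.mem_Icc] at hx; simp only [Finset.mem_range]; omega
          · rw [Finset.mem_range] at ht; omega
          · rw [Finset.mem_Icc] at hx; omega
          · rw [Finset.mem_range] at ht
            rw [show S.d - (S.d - (ρ + 1) - t) = ρ + 1 + t by omega, transpose_expect]
            apply expect_congr
            intro w
            rw [show ρ + 1 + t - 1 = ρ + t by omega,
              show ρ + 1 + t - (ρ + 1) = t by omega,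
              show k + (S.d : ℤ) - ((ρ + 1 : ℕ) : ℤ) - ((S.d - (ρ + 1) - t : ℕ) : ℤ)
                = k + (t : ℤ) by omega,
              Matrix.transpose_mul,
              TWT0_trans c (by omega) hN (S.d - (ρ + 1) - t) (by omega) (by omega) _ _
                (by omega) (by omega),
              Matrix.transpose_mul]
            simp only [Matrix.mul_assoc]
      · -- second sum
        refine Finset.sum_nbij' (fun u => S.d - (ρ + 1) + u) (fun x => x - (S.d - (ρ + 1)))
          (fun u hu => ?_) (fun x hx => ?_) (fun u hu => ?_) (fun x hx => ?_)
          (fun u hu => ?_)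
        · rw [Finset.mem_Icc] at hu; simp only [Finset.mem_Icc]; omega
        · rw [Finset.mem_Icc] at hx; simp only [Finset.mem_Icc]; omega
        · rw [Finset.mem_Icc] at hu; omega
        · rw [Finset.mem_Icc] at hx; omega
        · rw [Finset.mem_Icc] at hu
          rw [show S.d - (S.d - (ρ + 1) + u) = ρ + 1 - u by omega, transpose_expect]
          apply expect_congr
          intro w
          rw [show ρ + 1 - u - 1 = ρ - u by omega,
            show S.d - (ρ + 1) + u - (S.d - (ρ + 1)) = u by omega,
            show k + (S.d : ℤ) - ((ρ + 1 : ℕ) : ℤ) - ((S.d - (ρ + 1) + u : ℕ) : ℤ)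
              = k - (u : ℤ) by omega,
            TWT_trans c (by omega) hN (S.d - (ρ + 1) + u) u (by omega) (by omega) _ _
              (by omega) (by omega)]

end Key


end MJLSAux

end

/-- stated with `r = r' + 1`, so that `2 ≤ r ≤ d-1` becomes `1 ≤ r' ≤ d-2` -/
theorem stmt14 (S : MJParams) (hd3 : 3 ≤ S.d) (hR : S.R.PosDef) (hQ : S.Q.PosSemidef)
    (N : ℤ) (hN : (S.d : ℤ) ≤ N) (c : CDREX S N)
    (r' : ℕ) (hr1 : 1 ≤ r') (hr2 : r' + 1 ≤ S.d - 1)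
    (k : ℤ) (hk0 : 0 ≤ k) (hkN : k ≤ N - S.d + 1) :
    (∀ pth : Fin r' → Fin S.L,
      (∑ j, S.Pr (pth ⟨0, hr1⟩) j • ((S.A j)ᵀ * (c.α (r' + 1) (Fin.cons j pth) k)ᵀ))
        = (c.α r' pth (k - 1))ᵀ) ∧
    (∀ i : Fin S.L,
      S.expect i (r' + 1) (fun q =>
        (S.Bget q r')ᵀ * (c.α (r' + 1) (fun t : Fin (r' + 1) => S.pget q (r' - (t : ℕ))) k)ᵀ)
        = (c.T (r' + 1) i (k - (r' + 1)))ᵀ) := by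
  constructor
  · intro pth
    have h := MJLSAux.claim1 c hd3 hN k hk0 hkN r' hr1 (by omega) pth
    rw [MJLSAux.pget_lt pth (by omega : 0 < r')] at h
    exact h
  · intro i
    have h := MJLSAux.claim2 c hd3 hN k hk0 hkN (r' + 1) (by omega) hr2 i
    simp only [Nat.add_sub_cancel] at h
    rw [show k - ((r' + 1 : ℕ) : ℤ) = k - ((r' : ℤ) + 1) by push_cast; ring] at h
    exact h
end
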